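/- arXiv:2305.06612 — 5 statements merged into one kernel-verified Lean document; each statement's English description precedes it below -/
import Mathlib

section
/- For every complex number ζ with nonzero imaginary part, the plasma dispersion function Z(ζ) = (1/√(2π)) ∫_ℝ e^{-v²/2}/(v-ζ) dv satisfies the differential equation dZ/dζ = -ζ Z(ζ) - 1. -/
open MeasureTheory

/-- The plasma dispersion function `Z(ζ) = (1/√(2π)) ∫_ℝ e^{-v²/2}/(v-ζ) dv`. -/
noncomputable def plasmaZ (ζ : ℂ) : ℂ :=
  (Real.sqrt (2 * Real.pi) : ℂ)⁻¹ *
    ∫ v : ℝ, Complex.exp (-(v : ℂ) ^ 2 / 2) / ((v : ℂ) - ζ)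

section PZAux

open Real Set Filter Topology

lemma pz_sub_ne {ξ : ℂ} (hξ : ξ.im ≠ 0) (v : ℝ) : (v : ℂ) - ξ ≠ 0 := by
  intro h
  apply hξ
  have h2 : ((v:ℂ) - ξ).im = 0 := by rw [h]; simp
  simpa using h2

lemma pz_abs_le (ξ : ℂ) (v : ℝ) : |ξ.im| ≤ ‖(v:ℂ) - ξ‖ := by
  have h := Complex.abs_im_le_norm ((v:ℂ) - ξ)
  simpa using h

lemma pz_norm_gauss (v : ℝ) : ‖Complex.exp (-(v:ℂ)^2/2)‖ = Real.exp (-v^2/2) := by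
  have h : (-(v:ℂ)^2/2) = ((-v^2/2 : ℝ) : ℂ) := by push_cast; ring
  rw [h, Complex.norm_exp, Complex.ofReal_re]

lemma pz_gauss_int : Integrable fun v : ℝ => Real.exp (-v^2/2) := by
  have h := integrable_exp_neg_mul_sq (show (0:ℝ) < 1/2 by norm_num)
  have e : (fun x:ℝ => Real.exp (-(1/2)*x^2)) = fun v => Real.exp (-v^2/2) := by
    funext x; ring_nf
  rwa [e] at h

lemma pz_absgauss_int : Integrable fun v : ℝ => |v| * Real.exp (-v^2/2) := by
  have h := (integrable_mul_exp_neg_mul_sq (show (0:ℝ) < 1/2 by norm_num)).abs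
  have e : (fun x:ℝ => |x * Real.exp (-(1/2)*x^2)|) = fun v => |v| * Real.exp (-v^2/2) := by
    funext x; rw [abs_mul, abs_of_nonneg (exp_pos _).le]; ring_nf
  rwa [e] at h

lemma pz_cont_gauss : Continuous fun v : ℝ => Complex.exp (-(v:ℂ)^2/2) := by
  apply Complex.continuous_exp.comp
  continuity

lemma pz_cont_sub (ξ : ℂ) : Continuous fun v : ℝ => (v:ℂ) - ξ := by continuity

lemma pz_gauss_intC : Integrable fun v : ℝ => Complex.exp (-(v:ℂ)^2/2) := by
  refine Integrable.mono' pz_gauss_int pz_cont_gauss.aestronglyMeasurable ?_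
  exact Eventually.of_forall fun v => le_of_eq (pz_norm_gauss v)

lemma pz_int_one {ξ : ℂ} (hξ : ξ.im ≠ 0) :
    Integrable fun v : ℝ => Complex.exp (-(v:ℂ)^2/2) / ((v:ℂ) - ξ) := by
  have him : (0:ℝ) < |ξ.im| := abs_pos.mpr hξ
  refine Integrable.mono' (pz_gauss_int.const_mul (|ξ.im|⁻¹))
    ((pz_cont_gauss.div (pz_cont_sub ξ) (pz_sub_ne hξ)).aestronglyMeasurable) ?_
  refine Eventually.of_forall fun v => ?_
  rw [norm_div, pz_norm_gauss]
  rw [inv_mul_eq_div]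
  exact div_le_div_of_nonneg_left (exp_pos _).le him (pz_abs_le ξ v)

lemma pz_int_sq {ξ : ℂ} (hξ : ξ.im ≠ 0) :
    Integrable fun v : ℝ => Complex.exp (-(v:ℂ)^2/2) / ((v:ℂ) - ξ)^2 := by
  have him : (0:ℝ) < |ξ.im| := abs_pos.mpr hξ
  refine Integrable.mono' (pz_gauss_int.const_mul ((|ξ.im|^2)⁻¹))
    ((pz_cont_gauss.div ((pz_cont_sub ξ).pow 2)
      (fun v => pow_ne_zero 2 (pz_sub_ne hξ v))).aestronglyMeasurable) ?_
  refine Eventually.of_forall fun v => ?_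
  rw [norm_div, pz_norm_gauss, norm_pow, inv_mul_eq_div]
  exact div_le_div_of_nonneg_left (exp_pos _).le (pow_pos him 2)
    (pow_le_pow_left₀ him.le (pz_abs_le ξ v) 2)

lemma pz_int_mul {ξ : ℂ} (hξ : ξ.im ≠ 0) :
    Integrable fun v : ℝ => (v:ℂ) * Complex.exp (-(v:ℂ)^2/2) / ((v:ℂ) - ξ) := by
  have him : (0:ℝ) < |ξ.im| := abs_pos.mpr hξ
  refine Integrable.mono' (pz_absgauss_int.const_mul (|ξ.im|⁻¹))
    (((Complex.continuous_ofReal.mul pz_cont_gauss).div (pz_cont_sub ξ)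
      (pz_sub_ne hξ)).aestronglyMeasurable) ?_
  refine Eventually.of_forall fun v => ?_
  rw [norm_div, norm_mul, pz_norm_gauss, Complex.norm_real, Real.norm_eq_abs,
    inv_mul_eq_div]
  exact div_le_div_of_nonneg_left (mul_nonneg (abs_nonneg v) (exp_pos _).le) him (pz_abs_le ξ v)

set_option maxHeartbeats 1000000 in
lemma pz_deriv_v {ζ : ℂ} (hζ : ζ.im ≠ 0) (v : ℝ) :
    HasDerivAt (fun v : ℝ => Complex.exp (-(v:ℂ)^2/2) / ((v:ℂ) - ζ))
      (-(v:ℂ) * Complex.exp (-(v:ℂ)^2/2) / ((v:ℂ) - ζ)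
        - Complex.exp (-(v:ℂ)^2/2) / ((v:ℂ) - ζ)^2) v := by
  have hne : (v:ℂ) - ζ ≠ 0 := pz_sub_ne hζ v
  have h0 : HasDerivAt (fun v : ℝ => (v:ℂ)) 1 v := Complex.ofRealCLM.hasDerivAt
  have h1 : HasDerivAt (fun v : ℝ => -(v:ℂ)^2/2) (-(v:ℂ)) v := by
    have h := ((h0.mul h0).neg.div_const 2)
    have e0 : (fun v:ℝ => -(v:ℂ)^2/2) = fun v:ℝ => -((v:ℂ)*(v:ℂ))/2 := by funext x; ring
    rw [e0]
    refine h.congr_deriv (Eq.symm ?_)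
    ring
  have h2 := h1.cexp
  have h3 : HasDerivAt (fun v : ℝ => (v:ℂ) - ζ) 1 v := h0.sub_const ζ
  have h4 := HasDerivAt.comp v (hasDerivAt_inv hne) h3
  have h5 := h2.mul h4
  have e : (fun v : ℝ => Complex.exp (-(v:ℂ)^2/2) / ((v:ℂ) - ζ))
      = fun v : ℝ => Complex.exp (-(v:ℂ)^2/2) * (Inv.inv ∘ fun v : ℝ => ((v:ℂ) - ζ)) v := by
    funext x; simp [Function.comp, div_eq_mul_inv]
  rw [e]
  refine h5.congr_deriv (Eq.symm ?_)
  simp only [Function.comp]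
  field_simp
  ring

set_option maxHeartbeats 1000000 in
lemma pz_deriv_zeta (v : ℝ) {ξ : ℂ} (hne : (v:ℂ) - ξ ≠ 0) :
    HasDerivAt (fun ξ : ℂ => Complex.exp (-(v:ℂ)^2/2) / ((v:ℂ) - ξ))
      (Complex.exp (-(v:ℂ)^2/2) / ((v:ℂ) - ξ)^2) ξ := by
  have h3 : HasDerivAt (fun ξ : ℂ => (v:ℂ) - ξ) (-1) ξ := (hasDerivAt_id ξ).const_sub (v:ℂ)
  have h4 := h3.inv hne
  have h5 := h4.const_mul (Complex.exp (-(v:ℂ)^2/2))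
  have e : (fun ξ : ℂ => Complex.exp (-(v:ℂ)^2/2) / ((v:ℂ) - ξ))
      = fun ξ : ℂ => Complex.exp (-(v:ℂ)^2/2) * ((v:ℂ) - ξ)⁻¹ := by
    funext x; rw [div_eq_mul_inv]
  rw [e]
  refine h5.congr_deriv (Eq.symm ?_)
  field_simp

lemma pz_gauss_tendsto_top : Tendsto (fun v : ℝ => Real.exp (-v^2/2)) atTop (𝓝 0) := by
  apply Real.tendsto_exp_atBot.comp
  have h1 : Tendsto (fun v : ℝ => v^2) atTop atTop := tendsto_pow_atTop (by norm_num : (2:ℕ) ≠ 0)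
  have h2 : Tendsto (fun v : ℝ => -v^2) atTop atBot := tendsto_neg_atTop_atBot.comp h1
  exact h2.atBot_div_const (by norm_num)

lemma pz_gauss_tendsto_bot : Tendsto (fun v : ℝ => Real.exp (-v^2/2)) atBot (𝓝 0) := by
  have h := pz_gauss_tendsto_top.comp tendsto_neg_atBot_atTop
  exact h.congr fun x => by rw [Function.comp_apply, neg_sq]

lemma pz_tendsto {ζ : ℂ} (hζ : ζ.im ≠ 0) (l : Filter ℝ)
    (hl : Tendsto (fun v : ℝ => Real.exp (-v^2/2)) l (𝓝 0)) :
    Tendsto (fun v : ℝ => Complex.exp (-(v:ℂ)^2/2) / ((v:ℂ) - ζ)) l (𝓝 0) := by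
  have him : (0:ℝ) < |ζ.im| := abs_pos.mpr hζ
  have hbound : ∀ v : ℝ, ‖Complex.exp (-(v:ℂ)^2/2) / ((v:ℂ) - ζ)‖
      ≤ |ζ.im|⁻¹ * Real.exp (-v^2/2) := by
    intro v
    rw [norm_div, pz_norm_gauss, inv_mul_eq_div]
    exact div_le_div_of_nonneg_left (exp_pos _).le him (pz_abs_le ζ v)
  have h0 : Tendsto (fun v : ℝ => |ζ.im|⁻¹ * Real.exp (-v^2/2)) l (𝓝 0) := by
    have := hl.const_mul (|ζ.im|⁻¹)
    simpa using this
  exact squeeze_zero_norm hbound h0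

lemma pz_integral_gauss :
    ∫ v : ℝ, Complex.exp (-(v:ℂ)^2/2) = (Real.sqrt (2*Real.pi) : ℂ) := by
  have e : (fun v : ℝ => Complex.exp (-(v:ℂ)^2/2))
      = fun v : ℝ => ((Real.exp (-v^2/2) : ℝ) : ℂ) := by
    funext v
    rw [Complex.ofReal_exp]
    congr 1
    push_cast
    ring
  have e2 : ∫ v : ℝ, ((Real.exp (-v^2/2) : ℝ) : ℂ)
      = ((∫ v : ℝ, Real.exp (-v^2/2) : ℝ) : ℂ) := integral_ofReal
  rw [e, e2]
  norm_cast
  have h := integral_gaussian (1/2)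
  have e3 : (fun x:ℝ => Real.exp (-(1/2)*x^2)) = fun v => Real.exp (-v^2/2) := by
    funext x; ring_nf
  rw [e3] at h
  rw [h]
  congr 1
  ring

/-- FTC: the integral of the derivative vanishes. -/
lemma pz_key {ζ : ℂ} (hζ : ζ.im ≠ 0) :
    (∫ v : ℝ, Complex.exp (-(v:ℂ)^2/2) / ((v:ℂ) - ζ)^2)
      = - ∫ v : ℝ, (v:ℂ) * Complex.exp (-(v:ℂ)^2/2) / ((v:ℂ) - ζ) := by
  set f : ℝ → ℂ := fun v => Complex.exp (-(v:ℂ)^2/2) / ((v:ℂ) - ζ) with hf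
  set f' : ℝ → ℂ := fun v => -(v:ℂ) * Complex.exp (-(v:ℂ)^2/2) / ((v:ℂ) - ζ)
      - Complex.exp (-(v:ℂ)^2/2) / ((v:ℂ) - ζ)^2 with hf'
  have hint : Integrable f' := by
    have h := ((pz_int_mul hζ).neg.sub (pz_int_sq hζ))
    refine h.congr (Eventually.of_forall fun v => ?_)
    simp only [hf', Pi.sub_apply, Pi.neg_apply]
    ring
  have hderiv : ∀ v : ℝ, HasDerivAt f (f' v) v := fun v => pz_deriv_v hζ v
  have htop : Tendsto f atTop (𝓝 0) := pz_tendsto hζ _ pz_gauss_tendsto_top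
  have hbot : Tendsto f atBot (𝓝 0) := pz_tendsto hζ _ pz_gauss_tendsto_bot
  have hIoi : ∫ v in Ioi (0:ℝ), f' v = 0 - f 0 :=
    integral_Ioi_of_hasDerivAt_of_tendsto' (fun x _ => hderiv x) hint.integrableOn htop
  have hIic : ∫ v in Iic (0:ℝ), f' v = f 0 - 0 :=
    integral_Iic_of_hasDerivAt_of_tendsto' (fun x _ => hderiv x) hint.integrableOn hbot
  have htotal : ∫ v : ℝ, f' v = 0 := by
    rw [← intervalIntegral.integral_Iic_add_Ioi hint.integrableOn hint.integrableOn, hIoi, hIic]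
    ring
  have hsplit : ∫ v : ℝ, f' v
      = (- ∫ v : ℝ, (v:ℂ) * Complex.exp (-(v:ℂ)^2/2) / ((v:ℂ) - ζ))
        - ∫ v : ℝ, Complex.exp (-(v:ℂ)^2/2) / ((v:ℂ) - ζ)^2 := by
    have e : f' = fun v : ℝ => (-((v:ℂ) * Complex.exp (-(v:ℂ)^2/2) / ((v:ℂ) - ζ)))
        - Complex.exp (-(v:ℂ)^2/2) / ((v:ℂ) - ζ)^2 := by
      funext v; simp only [hf']; ring
    have hneg : Integrable (fun v : ℝ => -((v:ℂ) * Complex.exp (-(v:ℂ)^2/2) / ((v:ℂ) - ζ))) :=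
      (pz_int_mul hζ).neg
    rw [e, integral_sub hneg (pz_int_sq hζ), integral_neg]
  rw [htotal] at hsplit
  linear_combination hsplit

lemma pz_split_mul {ζ : ℂ} (hζ : ζ.im ≠ 0) :
    ∫ v : ℝ, (v:ℂ) * Complex.exp (-(v:ℂ)^2/2) / ((v:ℂ) - ζ)
      = (Real.sqrt (2*Real.pi) : ℂ)
        + ζ * ∫ v : ℝ, Complex.exp (-(v:ℂ)^2/2) / ((v:ℂ) - ζ) := by
  have e : (fun v : ℝ => (v:ℂ) * Complex.exp (-(v:ℂ)^2/2) / ((v:ℂ) - ζ))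
      = fun v : ℝ => Complex.exp (-(v:ℂ)^2/2)
        + ζ * (Complex.exp (-(v:ℂ)^2/2) / ((v:ℂ) - ζ)) := by
    funext v
    have hne : (v:ℂ) - ζ ≠ 0 := pz_sub_ne hζ v
    field_simp
    ring
  rw [e, integral_add pz_gauss_intC ((pz_int_one hζ).const_mul ζ), integral_const_mul,
    pz_integral_gauss]

lemma pz_hasDerivAt_int {ζ : ℂ} (hζ : ζ.im ≠ 0) :
    HasDerivAt (fun ξ : ℂ => ∫ v : ℝ, Complex.exp (-(v:ℂ)^2/2) / ((v:ℂ) - ξ))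
      (∫ v : ℝ, Complex.exp (-(v:ℂ)^2/2) / ((v:ℂ) - ζ)^2) ζ := by
  have him : (0:ℝ) < |ζ.im| := abs_pos.mpr hζ
  set ε : ℝ := |ζ.im| / 2 with hε
  have εpos : 0 < ε := by positivity
  have hball : ∀ ξ ∈ Metric.ball ζ ε, ε ≤ |ξ.im| := by
    intro ξ hξ
    have h1 : |ξ.im - ζ.im| ≤ ‖ξ - ζ‖ := by
      have := Complex.abs_im_le_norm (ξ - ζ)
      simpa using this
    have h2 : ‖ξ - ζ‖ < ε := by simpa [Metric.mem_ball, dist_eq_norm] using hξ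
    have h3 : |ζ.im| - |ξ.im| ≤ |ξ.im - ζ.im| := by
      have := abs_sub_abs_le_abs_sub ζ.im ξ.im
      rw [abs_sub_comm] at this
      linarith [this]
    have : |ζ.im| - |ξ.im| < ε := lt_of_le_of_lt h3 (lt_of_le_of_lt h1 h2)
    have : |ζ.im| - ε < |ξ.im| := by linarith
    rw [hε] at this ⊢
    linarith
  have hballne : ∀ ξ ∈ Metric.ball ζ ε, ξ.im ≠ 0 := by
    intro ξ hξ
    have := hball ξ hξ
    intro h; rw [h] at this; simp at this; linarith
  have key := hasDerivAt_integral_of_dominated_loc_of_deriv_le (𝕜 := ℂ)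
    (F := fun ξ : ℂ => fun v : ℝ => Complex.exp (-(v:ℂ)^2/2) / ((v:ℂ) - ξ))
    (F' := fun ξ : ℂ => fun v : ℝ => Complex.exp (-(v:ℂ)^2/2) / ((v:ℂ) - ξ)^2)
    (bound := fun v : ℝ => (ε^2)⁻¹ * Real.exp (-v^2/2))
    (Metric.ball_mem_nhds ζ εpos) ?_ (pz_int_one hζ) ?_ ?_ (pz_gauss_int.const_mul _) ?_
  · exact key.2
  · filter_upwards [Metric.ball_mem_nhds ζ εpos] with ξ hξ
    exact ((pz_cont_gauss.div (pz_cont_sub ξ)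
      (pz_sub_ne (hballne ξ hξ))).aestronglyMeasurable)
  · exact ((pz_cont_gauss.div ((pz_cont_sub ζ).pow 2)
      (fun v => pow_ne_zero 2 (pz_sub_ne hζ v))).aestronglyMeasurable)
  · refine Eventually.of_forall fun v => fun ξ hξ => ?_
    rw [norm_div, pz_norm_gauss, norm_pow, inv_mul_eq_div]
    refine div_le_div_of_nonneg_left (Real.exp_pos _).le (by positivity) ?_
    calc ε^2 ≤ |ξ.im|^2 := pow_le_pow_left₀ εpos.le (hball ξ hξ) 2
    _ ≤ ‖(v:ℂ) - ξ‖^2 := pow_le_pow_left₀ (abs_nonneg _) (pz_abs_le ξ v) 2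
  · refine Eventually.of_forall fun v => fun ξ hξ => ?_
    exact pz_deriv_zeta v (pz_sub_ne (hballne ξ hξ) v)

end PZAux

/-- For every `ζ` off the real axis, `Z' (ζ) = -ζ Z(ζ) - 1`. -/
theorem plasmaZ_hasDerivAt (ζ : ℂ) (hζ : ζ.im ≠ 0) :
    HasDerivAt plasmaZ (-ζ * plasmaZ ζ - 1) ζ := by
  have c_ne : (Real.sqrt (2*Real.pi) : ℂ) ≠ 0 := by
    have : (0:ℝ) < Real.sqrt (2*Real.pi) := Real.sqrt_pos.mpr (by positivity)
    exact_mod_cast this.ne'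
  have h := (pz_hasDerivAt_int hζ).const_mul ((Real.sqrt (2*Real.pi) : ℂ)⁻¹)
  have hfun : (fun ξ : ℂ => (Real.sqrt (2*Real.pi) : ℂ)⁻¹
      * ∫ v : ℝ, Complex.exp (-(v:ℂ)^2/2) / ((v:ℂ) - ξ)) = plasmaZ := by
    funext ξ; rfl
  rw [hfun] at h
  refine h.congr_deriv (Eq.symm ?_)
  rw [pz_key hζ, pz_split_mul hζ]
  unfold plasmaZ
  have h1 : (Real.sqrt (2*Real.pi) : ℂ)⁻¹ * (Real.sqrt (2*Real.pi) : ℂ) = 1 :=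
    inv_mul_cancel₀ c_ne
  linear_combination h1
end

section
/- For every complex number ζ with Im ζ ≠ 0, the plasma dispersion function satisfies the bound |Z(ζ)| ≤ √(π/2). -/
open MeasureTheory

open Complex Set Real Filter

noncomputable section


-- Step 1: ∫_{Ioi 0} cexp (I*t*w) dt = I / w when 0 < w.im
lemma int_cexp_Ioi (w : ℂ) (hw : 0 < w.im) :
    ∫ t in Ioi (0:ℝ), Complex.exp (I * t * w) = I / w := by
  have hw0 : w ≠ 0 := fun h => by simp [h] at hw
  have hIw : I * w ≠ 0 := mul_ne_zero I_ne_zero hw0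
  have hre : ∀ t : ℝ, (I * t * w).re = -(t * w.im) := by
    intro t; simp [Complex.mul_re, Complex.mul_im]
  have hderiv : ∀ t : ℝ, HasDerivAt (fun t : ℝ => Complex.exp (I * t * w) / (I * w))
      (Complex.exp (I * t * w)) t := by
    intro t
    have h1 : HasDerivAt (fun t : ℝ => (I * t * w)) (I * w) t := by
      have : HasDerivAt (fun t : ℝ => (t : ℂ)) 1 t := Complex.ofRealCLM.hasDerivAt
      simpa [mul_comm, mul_assoc, mul_left_comm] using (this.const_mul (I * w))
    have h2 := (h1.cexp).div_const (I * w)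
    simpa [mul_div_cancel_right₀ _ hIw] using h2
  have hint : IntegrableOn (fun t : ℝ => Complex.exp (I * t * w)) (Ioi 0) := by
    have : IntegrableOn (fun t : ℝ => Real.exp (-(w.im) * t)) (Ioi 0) :=
      exp_neg_integrableOn_Ioi 0 hw
    refine (this.mono' ?_ ?_)
    · exact (Complex.continuous_exp.comp (by continuity)).aestronglyMeasurable.restrict
    · filter_upwards with t
      simp only [Complex.norm_exp, hre]
      simp [mul_comm]
  have htend : Tendsto (fun t : ℝ => Complex.exp (I * t * w) / (I * w)) atTop (nhds 0) := by
    rw [show (0:ℂ) = 0 / (I * w) by simp]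
    refine Tendsto.div_const ?_ _
    rw [tendsto_zero_iff_norm_tendsto_zero]
    simp only [Complex.norm_exp, hre]
    have h := (Real.tendsto_exp_neg_atTop_nhds_zero).comp (tendsto_id.atTop_mul_const hw)
    exact h
  have := integral_Ioi_of_hasDerivAt_of_tendsto (a := 0)
    (f := fun t : ℝ => Complex.exp (I * t * w) / (I * w))
    (f' := fun t : ℝ => Complex.exp (I * t * w))
    ((hderiv 0).continuousAt.continuousWithinAt) (fun x _ => hderiv x) hint htend
  rw [this]
  have h0 : Complex.exp (I * (0:ℝ) * w) = 1 := by simp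
  rw [h0, zero_sub, eq_div_iff hw0]
  field_simp
  rw [Complex.I_sq]

lemma plasmaZ_key (ζ : ℂ) (hζ : ζ.im < 0) :
    ∫ v : ℝ, Complex.exp (-(v : ℂ) ^ 2 / 2) / ((v : ℂ) - ζ) =
      (Real.sqrt (2 * Real.pi) : ℂ) * (-I) *
        ∫ t in Ioi (0:ℝ), Complex.exp (-(I * t * ζ)) * Complex.exp (-(t:ℂ)^2/2) := by
  set f : ℝ → ℝ → ℂ := fun v t =>
    (Real.exp (-(1/2)*v^2) : ℂ) * (-I * Complex.exp (I * t * ((v:ℂ) - ζ))) with hf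
  have hcv : ∀ v : ℝ, ((Real.exp (-(1/2)*v^2) : ℝ) : ℂ) = Complex.exp (-(1/2 : ℂ) * (v:ℂ)^2) := by
    intro v; rw [Complex.ofReal_exp]; congr 1; push_cast; ring
  have hcv' : ∀ v : ℝ, Complex.exp (-(v : ℂ) ^ 2 / 2) = ((Real.exp (-(1/2)*v^2) : ℝ) : ℂ) := by
    intro v; rw [Complex.ofReal_exp]; congr 1; push_cast; ring
  -- pointwise representation
  have hA : ∀ v : ℝ, Complex.exp (-(v : ℂ) ^ 2 / 2) / ((v : ℂ) - ζ) = ∫ t in Ioi (0:ℝ), f v t := by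
    intro v
    have hwim : 0 < ((v:ℂ) - ζ).im := by simp [Complex.sub_im]; linarith
    rw [hf]
    simp only []
    rw [MeasureTheory.integral_const_mul, MeasureTheory.integral_const_mul,
      int_cexp_Ioi _ hwim, hcv' v]
    have hw0 : (v:ℂ) - ζ ≠ 0 := fun h => by simp [h] at hwim
    field_simp
    rw [Complex.I_sq, neg_neg]
  -- integrability of uncurried function
  have hg1 : Integrable (fun v:ℝ => Real.exp (-(1/2)*v^2)) :=
    integrable_exp_neg_mul_sq (by norm_num)
  have hg2 : Integrable (fun t:ℝ => Real.exp (ζ.im * t)) (volume.restrict (Ioi 0)) := by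
    have := exp_neg_integrableOn_Ioi 0 (show 0 < -ζ.im by linarith)
    simpa [IntegrableOn] using this
  have hF : Integrable (Function.uncurry f) (volume.prod (volume.restrict (Ioi 0))) := by
    refine (hg1.mul_prod hg2).mono' ?_ ?_
    · apply Continuous.aestronglyMeasurable
      apply Continuous.mul
      · exact Complex.continuous_ofReal.comp (by continuity)
      · exact continuous_const.mul (Complex.continuous_exp.comp (by continuity))
    · filter_upwards with p
      rcases p with ⟨v, t⟩
      simp only [Function.uncurry, hf, norm_mul, Complex.norm_exp,
        norm_neg, Complex.norm_I, Complex.norm_real, Real.norm_eq_abs]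
      have h1 : |Real.exp (-(1/2)*v^2)| = Real.exp (-(1/2)*v^2) := abs_of_pos (Real.exp_pos _)
      have h2 : (I * ↑t * ((v:ℂ) - ζ)).re = ζ.im * t := by
        simp [Complex.mul_re, Complex.mul_im]; ring
      rw [h1, h2, one_mul]
  -- Fubini
  calc ∫ v : ℝ, Complex.exp (-(v : ℂ) ^ 2 / 2) / ((v : ℂ) - ζ)
      = ∫ v : ℝ, ∫ t in Ioi (0:ℝ), f v t := by
        exact integral_congr_ae (Filter.Eventually.of_forall hA)
    _ = ∫ t in Ioi (0:ℝ), ∫ v : ℝ, f v t := integral_integral_swap hF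
    _ = ∫ t in Ioi (0:ℝ), (-I * Complex.exp (-(I * t * ζ))) *
          ((2 * Real.pi : ℝ) ^ (1/2 : ℂ) * Complex.exp (-(t:ℂ)^2/2)) := by
        apply integral_congr_ae
        filter_upwards with t
        have hfe : ∀ v : ℝ, f v t = (-I * Complex.exp (-(I * ↑t * ζ))) *
            (Complex.exp (I * (t:ℂ) * (v:ℂ)) * Complex.exp (-(1/2 : ℂ) * (v:ℂ)^2)) := by
          intro v
          rw [hf]
          simp only []
          rw [hcv v]
          have : I * (t:ℂ) * ((v:ℂ) - ζ) = I*(t:ℂ)*(v:ℂ) + -(I*(t:ℂ)*ζ) := by ring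
          rw [this, Complex.exp_add]
          ring
        rw [integral_congr_ae (Filter.Eventually.of_forall hfe), MeasureTheory.integral_const_mul,
          fourierIntegral_gaussian (by norm_num : (0:ℝ) < (1/2 : ℂ).re) (t:ℂ)]
        congr 2
        · push_cast; ring
        · congr 1; ring
    _ = (Real.sqrt (2 * Real.pi) : ℂ) * (-I) *
        ∫ t in Ioi (0:ℝ), Complex.exp (-(I * t * ζ)) * Complex.exp (-(t:ℂ)^2/2) := by
        have hsq : ((2*Real.pi : ℝ):ℂ) ^ (1/2 : ℂ) = (Real.sqrt (2*Real.pi) : ℂ) := by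
          rw [show (1/2:ℂ) = ((1/2:ℝ):ℂ) by norm_num,
            ← Complex.ofReal_cpow (by positivity)]
          norm_num [Real.sqrt_eq_rpow]
        rw [← MeasureTheory.integral_const_mul]
        apply integral_congr_ae
        filter_upwards with t
        rw [hsq]
        ring

lemma plasmaZ_abs_le_neg (ζ : ℂ) (hζ : ζ.im < 0) :
    ‖plasmaZ ζ‖ ≤ Real.sqrt (Real.pi / 2) := by
  rw [plasmaZ, plasmaZ_key ζ hζ]
  set B := ∫ t in Ioi (0:ℝ), Complex.exp (-(I * t * ζ)) * Complex.exp (-(t:ℂ)^2/2) with hB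
  have hs : (0:ℝ) < Real.sqrt (2*Real.pi) := Real.sqrt_pos.mpr (by positivity)
  have habs : ‖(Real.sqrt (2*Real.pi) : ℂ)⁻¹ *
      ((Real.sqrt (2*Real.pi):ℂ) * (-I) * B)‖ = ‖B‖ := by
    rw [norm_mul, norm_mul, norm_mul, norm_inv, Complex.norm_real, Real.norm_eq_abs,
      abs_of_pos hs, norm_neg, Complex.norm_I]
    field_simp
  rw [habs]
  have hbound : ‖B‖ ≤ ∫ t in Ioi (0:ℝ), Real.exp (-(1/2)*t^2) := by
    rw [hB]
    refine norm_integral_le_of_norm_le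
      ((integrable_exp_neg_mul_sq (by norm_num : (0:ℝ) < 1/2)).integrableOn) ?_
    filter_upwards [ae_restrict_mem measurableSet_Ioi] with t ht
    rw [norm_mul]
    simp only [Complex.norm_exp]
    have h1 : (-(I * (t:ℂ) * ζ)).re = t * ζ.im := by
      simp [Complex.mul_re, Complex.mul_im]
    have h2 : (-(t:ℂ)^2/2).re = -(1/2)*t^2 := by
      rw [show (-(t:ℂ)^2/2) = ((-(1/2)*t^2 : ℝ):ℂ) by push_cast; ring, Complex.ofReal_re]
    rw [h1, h2]
    calc Real.exp (t*ζ.im) * Real.exp (-(1/2)*t^2)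
        ≤ 1 * Real.exp (-(1/2)*t^2) := by
          apply mul_le_mul_of_nonneg_right _ (Real.exp_nonneg _)
          refine Real.exp_le_one_iff.mpr ?_
          have ht0 : 0 < t := ht
          nlinarith
      _ = _ := one_mul _
  refine hbound.trans ?_
  rw [integral_gaussian_Ioi]
  rw [show Real.pi/(1/2:ℝ) = (Real.pi/2)*4 by ring, Real.sqrt_mul (by positivity),
    show Real.sqrt 4 = 2 by
      rw [show (4:ℝ)=2^2 by norm_num]; exact Real.sqrt_sq (by norm_num)]
  linarith [Real.sqrt_nonneg (Real.pi/2)]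


end

/-- For every `ζ` with nonzero imaginary part, `|Z(ζ)| ≤ √(π/2)`. -/
theorem plasmaZ_abs_le (ζ : ℂ) (hζ : ζ.im ≠ 0) :
    ‖plasmaZ ζ‖ ≤ Real.sqrt (Real.pi / 2) := by
  rcases lt_or_gt_of_ne hζ with h | h
  · exact plasmaZ_abs_le_neg ζ h
  · have hc : ((starRingEnd ℂ) ζ).im < 0 := by simp [Complex.conj_im]; linarith
    have hz : plasmaZ ζ = (starRingEnd ℂ) (plasmaZ ((starRingEnd ℂ) ζ)) := by
      rw [plasmaZ, plasmaZ, map_mul, map_inv₀, Complex.conj_ofReal, ← integral_conj]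
      congr 1
      apply integral_congr_ae; filter_upwards with v
      rw [map_div₀, ← Complex.exp_conj]
      simp [Complex.conj_ofReal, map_ofNat]
    rw [hz, Complex.norm_conj]
    exact plasmaZ_abs_le_neg _ hc
end

section
/- As ζ → 0 with Im ζ > 0, the plasma dispersion function Z(ζ) converges to i√(π/2), and as ζ → 0 with Im ζ < 0, Z(ζ) converges to -i√(π/2). -/
open MeasureTheory Filter

section Aux

open Complex Set Topology

variable {ζ : ℂ}

lemma lsub_ne (h : ζ.im ≠ 0) (v : ℝ) : (v:ℂ) - ζ ≠ 0 := by
  intro H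
  have := congrArg Complex.im H
  simp at this
  exact h this

lemma ladd_ne (h : ζ.im ≠ 0) (v : ℝ) : (v:ℂ) + ζ ≠ 0 := by
  intro H
  have := congrArg Complex.im H
  simp at this
  exact h this

lemma lsq_ne (h : ζ.im ≠ 0) (v : ℝ) : (v:ℂ)^2 - ζ^2 ≠ 0 := by
  have e : (v:ℂ)^2 - ζ^2 = ((v:ℂ) - ζ) * ((v:ℂ) + ζ) := by ring
  rw [e]
  exact mul_ne_zero (lsub_ne h v) (ladd_ne h v)

lemma lznz (h : ζ.im ≠ 0) : ζ ≠ 0 := fun H => h (by simp [H])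

lemma norm_gauss (v : ℝ) : ‖Complex.exp (-(v:ℂ)^2/2)‖ = Real.exp (-(v^2)/2) := by
  have e : (-(v:ℂ)^2/2) = ((-(v^2)/2 : ℝ) : ℂ) := by push_cast; ring
  rw [e, Complex.norm_exp, Complex.ofReal_re]

lemma integrable_gauss : Integrable (fun v:ℝ => Real.exp (-(v^2)/2)) := by
  have h := integrable_exp_neg_mul_sq (by norm_num : (0:ℝ) < 1/2)
  have e : ∀ v:ℝ, -(v^2)/2 = -(1/2)*v^2 := fun v => by ring
  simp_rw [e]
  exact h

lemma cont_main (h : ζ.im ≠ 0) :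
    Continuous (fun v:ℝ => Complex.exp (-(v:ℂ)^2/2) / ((v:ℂ) - ζ)) := by
  apply Continuous.div
  · exact Complex.continuous_exp.comp (by continuity)
  · continuity
  · exact fun v => lsub_ne h v

lemma integrable_main (h : ζ.im ≠ 0) :
    Integrable (fun v:ℝ => Complex.exp (-(v:ℂ)^2/2) / ((v:ℂ) - ζ)) := by
  refine (integrable_gauss.mul_const |ζ.im|⁻¹).mono' ((cont_main h).aestronglyMeasurable)
    (ae_of_all _ fun v => ?_)
  have h1 : |ζ.im| ≤ ‖(v:ℂ) - ζ‖ := by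
    have := Complex.abs_im_le_norm ((v:ℂ) - ζ)
    simpa using this
  have h2 : 0 < |ζ.im| := abs_pos.mpr h
  rw [norm_div, norm_gauss, ← div_eq_mul_inv]
  gcongr

lemma integral_comp_neg_real {E : Type*} [NormedAddCommGroup E] [NormedSpace ℝ E]
    (f : ℝ → E) : ∫ v:ℝ, f (-v) = ∫ v:ℝ, f v := by
  have A : MeasurableEmbedding (fun x:ℝ => -x) :=
    (Homeomorph.neg ℝ).isClosedEmbedding.measurableEmbedding
  calc ∫ v:ℝ, f (-v) = ∫ v, f v ∂(Measure.map (fun x:ℝ => -x) volume) :=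
        (A.integral_map f).symm
    _ = ∫ v:ℝ, f v := by rw [Measure.map_neg_eq_self]

lemma lpt (h : ζ.im ≠ 0) (v : ℝ) :
    Complex.exp (-(v:ℂ)^2/2) / ((v:ℂ) - ζ) + Complex.exp (-((-v:ℝ):ℂ)^2/2) / (((-v:ℝ):ℂ) - ζ)
      = (2*ζ) * (Complex.exp (-(v:ℂ)^2/2) / ((v:ℂ)^2 - ζ^2)) := by
  have e1 : ((-v : ℝ):ℂ) = -(v:ℂ) := by push_cast; ring
  rw [e1]
  have h1 := lsub_ne h v
  have h2 := ladd_ne h v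
  have h3 := lsq_ne h v
  have h4 : -(v:ℂ) - ζ ≠ 0 := by
    intro H; apply h2; linear_combination -H
  have e2 : (-(v:ℂ))^2 = (v:ℂ)^2 := by ring
  rw [e2]
  field_simp
  ring

lemma key_eq (h : ζ.im ≠ 0) :
    ∫ v:ℝ, Complex.exp (-(v:ℂ)^2/2) / ((v:ℂ) - ζ)
      = ζ * ∫ v:ℝ, Complex.exp (-(v:ℂ)^2/2) / ((v:ℂ)^2 - ζ^2) := by
  set f : ℝ → ℂ := fun v => Complex.exp (-(v:ℂ)^2/2) / ((v:ℂ) - ζ) with hf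
  have hint : Integrable f := integrable_main h
  have hintneg : Integrable (fun v => f (-v)) := hint.comp_neg
  have hpt : ∀ v:ℝ, f v + f (-v) = (2*ζ) * (Complex.exp (-(v:ℂ)^2/2) / ((v:ℂ)^2 - ζ^2)) :=
    fun v => lpt h v
  have e3 : ∫ v:ℝ, (f v + f (-v)) = (2*ζ) * ∫ v:ℝ, Complex.exp (-(v:ℂ)^2/2) / ((v:ℂ)^2 - ζ^2) := by
    rw [← MeasureTheory.integral_const_mul]
    exact integral_congr_ae (ae_of_all _ hpt)
  rw [integral_add hint hintneg, integral_comp_neg_real f] at e3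
  have : (2:ℂ) * (∫ v, f v) = 2 * (ζ * ∫ v:ℝ, Complex.exp (-(v:ℂ)^2/2) / ((v:ℂ)^2 - ζ^2)) := by
    linear_combination e3
  exact mul_left_cancel₀ two_ne_zero this

lemma integrable_g (h : ζ.im ≠ 0) :
    Integrable (fun v:ℝ => Complex.exp (-(v:ℂ)^2/2) / ((v:ℂ)^2 - ζ^2)) := by
  have hint : Integrable (fun v:ℝ => Complex.exp (-(v:ℂ)^2/2) / ((v:ℂ) - ζ)) := integrable_main h
  have hintneg := hint.comp_neg
  have := (hint.add hintneg).const_mul (2*ζ)⁻¹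
  refine this.congr (ae_of_all _ fun v => ?_)
  simp only [Pi.add_apply]
  rw [lpt h v, ← mul_assoc, inv_mul_cancel₀ (by simpa using lznz h : (2*ζ:ℂ) ≠ 0), one_mul]

noncomputable def dd (ζ : ℂ) (v : ℝ) : ℂ :=
  (Complex.exp (-(v:ℂ)^2/2) - Complex.exp (-ζ^2/2)) / ((v:ℂ)^2 - ζ^2)

lemma bound_d (h : ζ.im ≠ 0) (hζ : ‖ζ‖ ≤ 1/2) (v : ℝ) :
    ‖dd ζ v‖ ≤ 8*(1+Real.exp 1) * (1+v^2)⁻¹ := by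
  have hD := lsq_ne h v
  have hDpos : (0:ℝ) < ‖(v:ℂ)^2 - ζ^2‖ := norm_pos_iff.mpr hD
  have hy : ‖ζ^2‖ ≤ 1/4 := by
    rw [norm_pow]
    calc ‖ζ‖ ^ 2 ≤ (1/2:ℝ)^2 :=
          pow_le_pow_left₀ (norm_nonneg ζ) hζ 2
      _ = 1/4 := by norm_num
  have hx : ‖(v:ℂ)^2‖ = v^2 := by
    rw [norm_pow]; simp [Complex.norm_real, sq_abs]
  have hey : ‖Complex.exp (-ζ^2/2)‖ ≤ Real.exp 1 := by
    rw [Complex.norm_exp]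
    apply Real.exp_le_exp.2
    calc (-ζ^2/2).re ≤ |(-ζ^2/2).re| := le_abs_self _
      _ ≤ ‖-ζ^2/2‖ := Complex.abs_re_le_norm _
      _ = ‖ζ^2‖ / 2 := by rw [norm_div, norm_neg]; simp
      _ ≤ 1 := by linarith
  have he1 : (0:ℝ) ≤ Real.exp 1 := (Real.exp_pos 1).le
  rcases le_or_gt (v^2) 1 with hv | hv
  · -- small v
    have hnum : ‖Complex.exp (-(v:ℂ)^2/2) - Complex.exp (-ζ^2/2)‖
        ≤ Real.exp 1 * ‖(v:ℂ)^2 - ζ^2‖ := by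
      have efac : Complex.exp (-(v:ℂ)^2/2) - Complex.exp (-ζ^2/2)
          = Complex.exp (-ζ^2/2) * (Complex.exp ((ζ^2 - (v:ℂ)^2)/2) - 1) := by
        rw [mul_sub, ← Complex.exp_add, mul_one]
        ring_nf
      rw [efac, norm_mul]
      have harg : ‖(ζ^2 - (v:ℂ)^2)/2‖ ≤ 1 := by
        rw [norm_div]
        have hs : ‖ζ^2 - (v:ℂ)^2‖ ≤ 1/4 + v^2 := by
          calc ‖ζ^2 - (v:ℂ)^2‖ ≤ ‖ζ^2‖ + ‖(v:ℂ)^2‖ :=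
                norm_sub_le _ _
            _ ≤ 1/4 + v^2 := by rw [hx]; linarith
        simp only [Complex.norm_two]
        linarith
      have hb := Complex.norm_exp_sub_one_le harg
      have hkey : ‖Complex.exp ((ζ^2 - (v:ℂ)^2)/2) - 1‖ ≤ ‖(v:ℂ)^2 - ζ^2‖ := by
        calc ‖Complex.exp ((ζ^2 - (v:ℂ)^2)/2) - 1‖
            ≤ 2 * ‖(ζ^2 - (v:ℂ)^2)/2‖ := hb
          _ = ‖ζ^2 - (v:ℂ)^2‖ := by
              rw [norm_div, Complex.norm_two]; ring
          _ = ‖(v:ℂ)^2 - ζ^2‖ := by rw [norm_sub_rev]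
      exact mul_le_mul hey hkey (norm_nonneg _) he1
    have h1 : ‖dd ζ v‖ ≤ Real.exp 1 := by
      rw [dd, norm_div, div_le_iff₀ hDpos]
      linarith
    have h2 : (1/2:ℝ) ≤ (1+v^2)⁻¹ := by
      have ha : (0:ℝ) < 1 + v^2 := by positivity
      have hb2 : (1:ℝ) + v^2 ≤ 2 := by linarith
      calc (1/2:ℝ) ≤ 1/(1+v^2) := one_div_le_one_div_of_le ha hb2
        _ = (1+v^2)⁻¹ := one_div _
    calc ‖dd ζ v‖ ≤ Real.exp 1 := h1
      _ ≤ 8*(1+Real.exp 1) * (1/2) := by linarith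
      _ ≤ 8*(1+Real.exp 1) * (1+v^2)⁻¹ := by
          apply mul_le_mul_of_nonneg_left h2 (by positivity)
  · -- large v
    have hden : (3/8:ℝ) * (1+v^2) ≤ ‖(v:ℂ)^2 - ζ^2‖ := by
      have hlow := norm_sub_norm_le ((v:ℂ)^2) (ζ^2)
      rw [hx] at hlow
      nlinarith
    have hnum : ‖Complex.exp (-(v:ℂ)^2/2) - Complex.exp (-ζ^2/2)‖ ≤ 1 + Real.exp 1 := by
      have hone : ‖Complex.exp (-(v:ℂ)^2/2)‖ ≤ 1 := by
        rw [norm_gauss]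
        apply Real.exp_le_one_iff.2
        nlinarith [sq_nonneg v]
      calc ‖Complex.exp (-(v:ℂ)^2/2) - Complex.exp (-ζ^2/2)‖
          ≤ ‖Complex.exp (-(v:ℂ)^2/2)‖ + ‖Complex.exp (-ζ^2/2)‖ := norm_sub_le _ _
        _ ≤ 1 + Real.exp 1 := by linarith
    rw [dd, norm_div, div_le_iff₀ hDpos]
    calc ‖Complex.exp (-(v:ℂ)^2/2) - Complex.exp (-ζ^2/2)‖ ≤ 1 + Real.exp 1 := hnum
      _ ≤ 8*(1+Real.exp 1) * (1+v^2)⁻¹ * ((3/8) * (1+v^2)) := by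
          have he : 8*(1+Real.exp 1) * (1+v^2)⁻¹ * ((3/8) * (1+v^2)) = 3*(1+Real.exp 1) := by
            field_simp
          rw [he]; linarith
      _ ≤ 8*(1+Real.exp 1) * (1+v^2)⁻¹ * ‖(v:ℂ)^2 - ζ^2‖ := by
          apply mul_le_mul_of_nonneg_left hden (by positivity)

lemma cont_dd (h : ζ.im ≠ 0) : Continuous (dd ζ) := by
  apply Continuous.div
  · exact (Complex.continuous_exp.comp (by continuity)).sub continuous_const
  · continuity
  · exact fun v => lsq_ne h v

lemma integrable_d (h : ζ.im ≠ 0) (hζ : ‖ζ‖ ≤ 1/2) : Integrable (dd ζ) := by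
  refine (integrable_inv_one_add_sq.const_mul (8*(1+Real.exp 1))).mono'
    ((cont_dd h).aestronglyMeasurable) (ae_of_all _ fun v => bound_d h hζ v)

lemma integrable_inv (h : ζ.im ≠ 0) (hζ : ‖ζ‖ ≤ 1/2) :
    Integrable (fun v:ℝ => ((v:ℂ)^2 - ζ^2)⁻¹) := by
  have := ((integrable_g h).sub (integrable_d h hζ)).const_mul (Complex.exp (ζ^2/2))
  refine this.congr (ae_of_all _ fun v => ?_)
  show Complex.exp (ζ^2/2) * (Complex.exp (-(v:ℂ)^2/2) / ((v:ℂ)^2 - ζ^2) - dd ζ v)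
    = ((v:ℂ)^2 - ζ^2)⁻¹
  rw [dd, div_sub_div_same, sub_sub_cancel]
  rw [show Complex.exp (ζ^2/2) * (Complex.exp (-ζ^2/2) / ((v:ℂ)^2 - ζ^2))
      = (Complex.exp (ζ^2/2) * Complex.exp (-ζ^2/2)) / ((v:ℂ)^2 - ζ^2) by ring]
  rw [← Complex.exp_add]
  rw [show ζ^2/2 + -ζ^2/2 = 0 by ring, Complex.exp_zero, one_div]

lemma cinv_top : Tendsto (fun x:ℝ => ((x:ℂ))⁻¹) atTop (𝓝 0) := by
  have h1 : Tendsto (fun x:ℝ => x⁻¹) atTop (𝓝 0) := tendsto_inv_atTop_zero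
  have h2 := (Complex.continuous_ofReal.tendsto 0).comp h1
  simpa [Function.comp_def] using h2

lemma cinv_bot : Tendsto (fun x:ℝ => ((x:ℂ))⁻¹) atBot (𝓝 0) := by
  have h1 : Tendsto (fun x:ℝ => x⁻¹) atBot (𝓝 0) := by
    have h0 := tendsto_inv_atTop_zero.comp (tendsto_neg_atBot_atTop : Tendsto (fun x:ℝ => -x) atBot atTop)
    have h0' := h0.neg
    simp only [Function.comp_def, neg_zero] at h0'
    refine h0'.congr fun x => ?_
    rw [← inv_neg, neg_neg]
  have h2 := (Complex.continuous_ofReal.tendsto 0).comp h1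
  simpa [Function.comp_def] using h2

/-- At `+∞`, `(x + ξ)` written as positive multiple of `1 + ξ/x`. -/
lemma arg_add_tendsto_top {ξ : ℂ} : Tendsto (fun x:ℝ => Complex.arg ((x:ℂ) + ξ)) atTop (𝓝 0) := by
  have hw : Tendsto (fun x:ℝ => 1 + ξ * ((x:ℂ))⁻¹) atTop (𝓝 1) := by
    have := (cinv_top.const_mul ξ).const_add (1:ℂ)
    simpa using this
  have hc : ContinuousAt Complex.arg 1 := Complex.continuousAt_arg (by simp [Complex.slitPlane])
  have h2 := hc.tendsto.comp hw
  rw [Complex.arg_one] at h2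
  apply h2.congr'
  filter_upwards [eventually_gt_atTop (0:ℝ)] with x hx
  have hx0 : ((x:ℂ)) ≠ 0 := by exact_mod_cast ne_of_gt hx
  have e : (x:ℂ) + ξ = (x:ℝ) * (1 + ξ * ((x:ℂ))⁻¹) := by
    field_simp
  rw [Function.comp_apply, ← Complex.arg_real_mul _ hx, ← e]

lemma warg_bot {ξ : ℂ} : Tendsto (fun x:ℝ => -1 - ξ * ((x:ℂ))⁻¹) atBot (𝓝 (-1)) := by
  have := ((cinv_bot.const_mul ξ).neg).const_add (-1:ℂ)
  simpa [sub_eq_add_neg] using this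

lemma decomp_bot {ξ : ℂ} : ∀ᶠ x:ℝ in atBot, (x:ℂ) + ξ = ((-x:ℝ):ℂ) * (-1 - ξ * ((x:ℂ))⁻¹) := by
  filter_upwards [eventually_lt_atBot (0:ℝ)] with x hx
  have hx0 : ((x:ℂ)) ≠ 0 := by exact_mod_cast ne_of_lt hx
  push_cast
  field_simp
  ring

lemma im_w_bot {ξ : ℂ} (x : ℝ) : (-1 - ξ * ((x:ℂ))⁻¹).im = -(ξ.im * x⁻¹) := by
  have : ((x:ℂ))⁻¹ = ((x⁻¹ : ℝ) : ℂ) := by push_cast; ring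
  rw [this]
  simp [Complex.sub_im, Complex.mul_im]

lemma arg_add_tendsto_bot_neg {ξ : ℂ} (h : ξ.im < 0) :
    Tendsto (fun x:ℝ => Complex.arg ((x:ℂ) + ξ)) atBot (𝓝 (-Real.pi)) := by
  have hw : Tendsto (fun x:ℝ => -1 - ξ * ((x:ℂ))⁻¹) atBot (𝓝 (-1)) := warg_bot
  have hφ : ContinuousAt (fun z:ℂ => Real.arcsin ((-z).im / ‖z‖) - Real.pi) (-1) := by
    apply ContinuousAt.sub _ continuousAt_const
    apply Real.continuous_arcsin.continuousAt.comp
    apply ContinuousAt.div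
    · exact (Complex.continuous_im.comp continuous_neg).continuousAt
    · exact continuous_norm.continuousAt
    · simp
  have h2 := hφ.tendsto.comp hw
  have hval : (fun z:ℂ => Real.arcsin ((-z).im / ‖z‖) - Real.pi) (-1) = -Real.pi := by
    simp
  norm_num at h2
  -- eventually re of w < 0
  have hre : ∀ᶠ x:ℝ in atBot, (-1 - ξ * ((x:ℂ))⁻¹).re < 0 := by
    have hr := (Complex.continuous_re.tendsto (-1:ℂ)).comp hw
    simp only [Complex.neg_re, Complex.one_re] at hr
    exact (hr.eventually_lt_const (by norm_num : (-1:ℝ) < 0))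
  apply h2.congr'
  filter_upwards [eventually_lt_atBot (0:ℝ), hre, decomp_bot (ξ := ξ)] with x hx hrex hdec
  have him : (-1 - ξ * ((x:ℂ))⁻¹).im < 0 := by
    rw [im_w_bot]
    have : ξ.im * x⁻¹ > 0 := mul_pos_of_neg_of_neg h (inv_neg''.mpr hx)
    linarith
  rw [Function.comp_apply, hdec, Complex.arg_real_mul _ (by linarith : (0:ℝ) < -x),
    Complex.arg_of_re_neg_of_im_neg hrex him]
  simp

lemma arg_add_tendsto_bot_pos {ξ : ℂ} (h : 0 < ξ.im) :
    Tendsto (fun x:ℝ => Complex.arg ((x:ℂ) + ξ)) atBot (𝓝 (Real.pi)) := by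
  have hw : Tendsto (fun x:ℝ => -1 - ξ * ((x:ℂ))⁻¹) atBot (𝓝 (-1)) := warg_bot
  have hφ : ContinuousAt (fun z:ℂ => Real.arcsin ((-z).im / ‖z‖) + Real.pi) (-1) := by
    apply ContinuousAt.add _ continuousAt_const
    apply Real.continuous_arcsin.continuousAt.comp
    apply ContinuousAt.div
    · exact (Complex.continuous_im.comp continuous_neg).continuousAt
    · exact continuous_norm.continuousAt
    · simp
  have h2 := hφ.tendsto.comp hw
  have hval : (fun z:ℂ => Real.arcsin ((-z).im / ‖z‖) + Real.pi) (-1) = Real.pi := by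
    simp
  norm_num at h2
  have hre : ∀ᶠ x:ℝ in atBot, (-1 - ξ * ((x:ℂ))⁻¹).re < 0 := by
    have hr := (Complex.continuous_re.tendsto (-1:ℂ)).comp hw
    simp only [Complex.neg_re, Complex.one_re] at hr
    exact (hr.eventually_lt_const (by norm_num : (-1:ℝ) < 0))
  apply h2.congr'
  filter_upwards [eventually_lt_atBot (0:ℝ), hre, decomp_bot (ξ := ξ)] with x hx hrex hdec
  have him : 0 ≤ (-1 - ξ * ((x:ℂ))⁻¹).im := by
    rw [im_w_bot]
    have : ξ.im * x⁻¹ < 0 := mul_neg_of_pos_of_neg h (inv_neg''.mpr hx)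
    linarith
  rw [Function.comp_apply, hdec, Complex.arg_real_mul _ (by linarith : (0:ℝ) < -x),
    Complex.arg_of_re_neg_of_im_nonneg hrex him]
  simp

lemma ratio_eventual {ξ η : ℂ} (l : Filter ℝ) (hl : ∀ᶠ x:ℝ in l, x ≠ 0) :
    (fun x:ℝ => (1+ξ*((x:ℂ))⁻¹)/(1+η*((x:ℂ))⁻¹)) =ᶠ[l]
      (fun x:ℝ => ((x:ℂ)+ξ)/((x:ℂ)+η)) := by
  filter_upwards [hl] with x hx
  have hx0 : ((x:ℂ)) ≠ 0 := by exact_mod_cast hx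
  have e1 : (1+ξ*((x:ℂ))⁻¹) = ((x:ℂ)+ξ)*((x:ℂ))⁻¹ := by field_simp
  have e2 : (1+η*((x:ℂ))⁻¹) = ((x:ℂ)+η)*((x:ℂ))⁻¹ := by field_simp
  rw [e1, e2, mul_div_mul_right _ _ (inv_ne_zero hx0)]

lemma ratio_tendsto {ξ η : ℂ} {l : Filter ℝ}
    (hinv : Tendsto (fun x:ℝ => ((x:ℂ))⁻¹) l (𝓝 0)) (hl : ∀ᶠ x:ℝ in l, x ≠ 0) :
    Tendsto (fun x:ℝ => ((x:ℂ)+ξ)/((x:ℂ)+η)) l (𝓝 1) := by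
  have h1 : Tendsto (fun x:ℝ => 1+ξ*((x:ℂ))⁻¹) l (𝓝 1) := by
    have := (hinv.const_mul ξ).const_add (1:ℂ); simpa using this
  have h2 : Tendsto (fun x:ℝ => 1+η*((x:ℂ))⁻¹) l (𝓝 1) := by
    have := (hinv.const_mul η).const_add (1:ℂ); simpa using this
  have h3 := h1.div h2 one_ne_zero
  simp only [div_one] at h3
  exact Tendsto.congr' (ratio_eventual l hl) h3

lemma logabs_diff_tendsto {ξ η : ℂ} {l : Filter ℝ}
    (hξ : ∀ x:ℝ, (x:ℂ)+ξ ≠ 0) (hη : ∀ x:ℝ, (x:ℂ)+η ≠ 0)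
    (hinv : Tendsto (fun x:ℝ => ((x:ℂ))⁻¹) l (𝓝 0)) (hl : ∀ᶠ x:ℝ in l, x ≠ 0) :
    Tendsto (fun x:ℝ => Real.log ‖(x:ℂ)+ξ‖ - Real.log ‖(x:ℂ)+η‖)
      l (𝓝 0) := by
  have hr := ratio_tendsto (ξ := ξ) (η := η) hinv hl
  have h2 := (continuous_norm.tendsto (1:ℂ)).comp hr
  rw [norm_one] at h2
  have h3 := (Real.continuousAt_log one_ne_zero).tendsto.comp h2
  rw [Real.log_one] at h3
  apply h3.congr
  intro x
  simp only [Function.comp_apply, norm_div]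
  rw [Real.log_div (norm_ne_zero_iff.mpr (hξ x)) (norm_ne_zero_iff.mpr (hη x))]

lemma G_top (h0 : 0 < ζ.im) :
    Tendsto (fun x:ℝ => Complex.log ((x:ℂ) - ζ) - Complex.log ((x:ℂ) + ζ)) atTop (𝓝 0) := by
  have h : ζ.im ≠ 0 := ne_of_gt h0
  have hξ : ∀ x:ℝ, (x:ℂ) + (-ζ) ≠ 0 := by
    intro x
    have := lsub_ne h x
    rwa [sub_eq_add_neg] at this
  have hη : ∀ x:ℝ, (x:ℂ) + ζ ≠ 0 := fun x => ladd_ne h x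
  have hne : ∀ᶠ x:ℝ in atTop, x ≠ 0 := by
    filter_upwards [eventually_gt_atTop (0:ℝ)] with x hx using ne_of_gt hx
  have hu := logabs_diff_tendsto hξ hη cinv_top hne
  have ha : Tendsto (fun x:ℝ => Complex.arg ((x:ℂ) + (-ζ)) - Complex.arg ((x:ℂ) + ζ))
      atTop (𝓝 0) := by
    have := (arg_add_tendsto_top (ξ := -ζ)).sub (arg_add_tendsto_top (ξ := ζ))
    simpa using this
  have hc := ((Complex.continuous_ofReal.tendsto 0).comp hu).add
    (((Complex.continuous_ofReal.tendsto 0).comp ha).mul_const Complex.I)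
  simp only [Complex.ofReal_zero, zero_mul, add_zero, zero_add] at hc
  apply hc.congr
  intro x
  simp only [Function.comp_apply]
  rw [Complex.log, Complex.log]
  rw [sub_eq_add_neg (x:ℂ) ζ]
  push_cast
  ring

lemma G_bot (h0 : 0 < ζ.im) :
    Tendsto (fun x:ℝ => Complex.log ((x:ℂ) - ζ) - Complex.log ((x:ℂ) + ζ)) atBot
      (𝓝 (-(2*Real.pi)*Complex.I)) := by
  have h : ζ.im ≠ 0 := ne_of_gt h0
  have hξ : ∀ x:ℝ, (x:ℂ) + (-ζ) ≠ 0 := by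
    intro x
    have := lsub_ne h x
    rwa [sub_eq_add_neg] at this
  have hη : ∀ x:ℝ, (x:ℂ) + ζ ≠ 0 := fun x => ladd_ne h x
  have hne : ∀ᶠ x:ℝ in atBot, x ≠ 0 := by
    filter_upwards [eventually_lt_atBot (0:ℝ)] with x hx using ne_of_lt hx
  have hu := logabs_diff_tendsto hξ hη cinv_bot hne
  have ha : Tendsto (fun x:ℝ => Complex.arg ((x:ℂ) + (-ζ)) - Complex.arg ((x:ℂ) + ζ))
      atBot (𝓝 (-(2*Real.pi))) := by
    have hb1 := arg_add_tendsto_bot_neg (ξ := -ζ) (by simpa using h0)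
    have hb2 := arg_add_tendsto_bot_pos (ξ := ζ) h0
    have := hb1.sub hb2
    have e : -Real.pi - Real.pi = -(2*Real.pi) := by ring
    rwa [e] at this
  have hc := ((Complex.continuous_ofReal.tendsto 0).comp hu).add
    (((Complex.continuous_ofReal.tendsto (-(2*Real.pi))).comp ha).mul_const Complex.I)
  simp only [Complex.ofReal_zero, zero_add] at hc
  have hc2 : Tendsto (fun x:ℝ =>
      ((Real.log ‖(x:ℂ)+(-ζ)‖ - Real.log ‖(x:ℂ)+ζ‖ : ℝ) : ℂ)
        + ((Complex.arg ((x:ℂ)+(-ζ)) - Complex.arg ((x:ℂ)+ζ) : ℝ) : ℂ) * Complex.I)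
      atBot (𝓝 ((-(2*Real.pi) : ℝ) * Complex.I)) := by
    simpa [Function.comp_def] using hc
  have : ((-(2*Real.pi) : ℝ) : ℂ) * Complex.I = -(2*Real.pi)*Complex.I := by push_cast; ring
  rw [this] at hc2
  apply hc2.congr
  intro x
  rw [Complex.log, Complex.log]
  rw [sub_eq_add_neg (x:ℂ) ζ]
  push_cast
  ring

lemma integral_inv_sq_sub (h0 : 0 < ζ.im) (hζ : ‖ζ‖ ≤ 1/2) :
    ∫ v:ℝ, ((v:ℂ)^2 - ζ^2)⁻¹ = Complex.I * Real.pi / ζ := by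
  have h : ζ.im ≠ 0 := ne_of_gt h0
  have hz0 : ζ ≠ 0 := lznz h
  set F : ℝ → ℂ := fun x => (2*ζ)⁻¹ * (Complex.log ((x:ℂ) - ζ) - Complex.log ((x:ℂ) + ζ))
    with hF
  have hderiv : ∀ x:ℝ, HasDerivAt F (((x:ℂ)^2 - ζ^2)⁻¹) x := by
    intro x
    have hs1 : (x:ℂ) - ζ ∈ Complex.slitPlane := by
      apply Or.inr
      simp [h]
    have hs2 : (x:ℂ) + ζ ∈ Complex.slitPlane := by
      apply Or.inr
      simp [h]
    have h1 : HasDerivAt (fun z:ℂ => Complex.log (z - ζ)) (((x:ℂ) - ζ)⁻¹) ((x:ℂ)) := by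
      have := (Complex.hasDerivAt_log hs1).comp ((x:ℂ))
        ((hasDerivAt_id ((x:ℂ))).sub_const ζ)
      simpa [Function.comp_def] using this
    have h2 : HasDerivAt (fun z:ℂ => Complex.log (z + ζ)) (((x:ℂ) + ζ)⁻¹) ((x:ℂ)) := by
      have := (Complex.hasDerivAt_log hs2).comp ((x:ℂ))
        ((hasDerivAt_id ((x:ℂ))).add_const ζ)
      simpa [Function.comp_def] using this
    have h3 := ((h1.comp_ofReal).sub (h2.comp_ofReal)).const_mul ((2*ζ)⁻¹)
    convert h3 using 1
    · rfl
    · rfl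
    have e1 := lsub_ne h x
    have e2 := ladd_ne h x
    have e3 := lsq_ne h x
    field_simp
    ring
  have hint := integrable_inv h hζ
  have htop : Tendsto F atTop (𝓝 0) := by
    have := (G_top h0).const_mul ((2*ζ)⁻¹)
    simpa only [mul_zero] using this
  have hbot : Tendsto F atBot (𝓝 (-(Complex.I * Real.pi / ζ))) := by
    have := (G_bot h0).const_mul ((2*ζ)⁻¹)
    have e : (2*ζ)⁻¹ * (-(2*Real.pi)*Complex.I) = -(Complex.I * Real.pi / ζ) := by
      field_simp
    rwa [e] at this
  have := integral_of_hasDerivAt_of_tendsto hderiv hint hbot htop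
  rw [this]
  ring

lemma plasma_split (h0 : 0 < ζ.im) (hζ : ‖ζ‖ ≤ 1/2) :
    ∫ v:ℝ, Complex.exp (-(v:ℂ)^2/2)/((v:ℂ)-ζ)
      = Complex.I * Real.pi * Complex.exp (-ζ^2/2) + ζ * ∫ v:ℝ, dd ζ v := by
  have h : ζ.im ≠ 0 := ne_of_gt h0
  have hz0 : ζ ≠ 0 := lznz h
  rw [key_eq h]
  have split : ∀ v:ℝ, Complex.exp (-(v:ℂ)^2/2)/((v:ℂ)^2-ζ^2)
      = dd ζ v + Complex.exp (-ζ^2/2) * ((v:ℂ)^2-ζ^2)⁻¹ := by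
    intro v
    rw [dd, ← div_eq_mul_inv, ← add_div, sub_add_cancel]
  have e1 : ∫ v:ℝ, Complex.exp (-(v:ℂ)^2/2)/((v:ℂ)^2-ζ^2)
      = (∫ v:ℝ, dd ζ v) + Complex.exp (-ζ^2/2) * ∫ v:ℝ, ((v:ℂ)^2-ζ^2)⁻¹ := by
    rw [← MeasureTheory.integral_const_mul,
      ← integral_add (integrable_d h hζ) ((integrable_inv h hζ).const_mul _)]
    exact integral_congr_ae (ae_of_all _ split)
  rw [e1, integral_inv_sq_sub h0 hζ]
  field_simp
  ring

lemma const_eq : (Real.sqrt (2 * Real.pi) : ℂ)⁻¹ * (Complex.I * Real.pi)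
    = Complex.I * (Real.sqrt (Real.pi / 2) : ℂ) := by
  have hpos : (0:ℝ) < Real.sqrt (2*Real.pi) := Real.sqrt_pos.mpr (by positivity)
  have hr : Real.sqrt (Real.pi/2) * Real.sqrt (2*Real.pi) = Real.pi := by
    rw [← Real.sqrt_mul (by positivity : (0:ℝ) ≤ Real.pi/2),
      show Real.pi/2*(2*Real.pi) = Real.pi^2 by ring]
    exact Real.sqrt_sq Real.pi_pos.le
  have hne : (Real.sqrt (2*Real.pi) : ℂ) ≠ 0 := by exact_mod_cast ne_of_gt hpos
  rw [inv_mul_eq_div, div_eq_iff hne, mul_assoc, ← Complex.ofReal_mul, hr]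

lemma upper_half : Tendsto plasmaZ (nhdsWithin 0 {ζ : ℂ | 0 < ζ.im})
    (𝓝 (Complex.I * (Real.sqrt (Real.pi / 2) : ℂ))) := by
  set c : ℂ := (Real.sqrt (2 * Real.pi) : ℂ)⁻¹ with hc
  set K : ℝ := ∫ v:ℝ, 8*(1+Real.exp 1)*(1+v^2)⁻¹ with hK
  have hs : ∀ᶠ ζ' in nhdsWithin (0:ℂ) {ζ : ℂ | 0 < ζ.im},
      0 < ζ'.im ∧ ‖ζ'‖ ≤ 1/2 := by
    have h1 : ∀ᶠ ζ' in nhdsWithin (0:ℂ) {ζ : ℂ | 0 < ζ.im}, ζ' ∈ {ζ : ℂ | 0 < ζ.im} :=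
      eventually_mem_nhdsWithin
    have h2 : ∀ᶠ ζ' in 𝓝 (0:ℂ), ‖ζ'‖ ≤ 1/2 := by
      filter_upwards [Metric.ball_mem_nhds (0:ℂ) (by norm_num : (0:ℝ) < 1/2)] with z hz
      have := mem_ball_zero_iff.mp hz
      linarith
    exact h1.and (h2.filter_mono nhdsWithin_le_nhds)
  -- part A
  have hA : Tendsto (fun ζ':ℂ => c * (Complex.I * Real.pi * Complex.exp (-ζ'^2/2)))
      (nhdsWithin 0 {ζ : ℂ | 0 < ζ.im}) (𝓝 (c * (Complex.I * Real.pi))) := by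
    have hcont : Continuous (fun ζ':ℂ => c * (Complex.I * Real.pi * Complex.exp (-ζ'^2/2))) := by
      apply continuous_const.mul
      apply continuous_const.mul
      exact Complex.continuous_exp.comp (by continuity)
    have := hcont.tendsto 0
    simp only [neg_zero, zero_pow, ne_eq, OfNat.ofNat_ne_zero, not_false_eq_true,
      zero_div, Complex.exp_zero, mul_one] at this
    exact this.mono_left nhdsWithin_le_nhds
  -- part B
  have hB : Tendsto (fun ζ':ℂ => c * (ζ' * ∫ v:ℝ, dd ζ' v))
      (nhdsWithin 0 {ζ : ℂ | 0 < ζ.im}) (𝓝 0) := by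
    apply squeeze_zero_norm'
    · filter_upwards [hs] with ζ' hζ'
      have hb : ‖∫ v:ℝ, dd ζ' v‖ ≤ K := by
        apply norm_integral_le_of_norm_le
          (integrable_inv_one_add_sq.const_mul (8*(1+Real.exp 1)))
        exact ae_of_all _ (bound_d (ne_of_gt hζ'.1) hζ'.2)
      calc ‖c * (ζ' * ∫ v:ℝ, dd ζ' v)‖ = ‖c‖ * (‖ζ'‖ * ‖∫ v:ℝ, dd ζ' v‖) := by
            rw [norm_mul, norm_mul]
        _ ≤ ‖c‖ * (‖ζ'‖ * K) := by
            apply mul_le_mul_of_nonneg_left _ (norm_nonneg c)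
            exact mul_le_mul_of_nonneg_left hb (norm_nonneg ζ')
        _ = (‖c‖ * K) * ‖ζ'‖ := by ring
    · have h1 : Tendsto (fun ζ':ℂ => ‖ζ'‖) (nhdsWithin 0 {ζ : ℂ | 0 < ζ.im}) (𝓝 0) := by
        have := (continuous_norm.tendsto (0:ℂ))
        rw [norm_zero] at this
        exact this.mono_left nhdsWithin_le_nhds
      have := h1.const_mul (‖c‖ * K)
      simpa using this
  have hsum := hA.add hB
  rw [add_zero, const_eq] at hsum
  apply hsum.congr'
  filter_upwards [hs] with ζ' hζ'
  rw [plasmaZ, plasma_split hζ'.1 hζ'.2]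
  ring

lemma plasma_conj (ξ : ℂ) : plasmaZ ((starRingEnd ℂ) ξ) = (starRingEnd ℂ) (plasmaZ ξ) := by
  rw [plasmaZ, plasmaZ, map_mul, map_inv₀, Complex.conj_ofReal, ← integral_conj]
  congr 1
  apply integral_congr_ae (ae_of_all _ fun v => ?_)
  rw [map_div₀, ← Complex.exp_conj]
  congr 1
  · congr 1
    rw [map_div₀, map_neg, map_pow, Complex.conj_ofReal]
    congr 1
    simp [Complex.ext_iff]
  · rw [map_sub, Complex.conj_ofReal]

lemma lower_half : Tendsto plasmaZ (nhdsWithin 0 {ζ : ℂ | ζ.im < 0})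
    (𝓝 (-Complex.I * (Real.sqrt (Real.pi / 2) : ℂ))) := by
  have hconj : Tendsto (fun ζ':ℂ => (starRingEnd ℂ) ζ')
      (nhdsWithin 0 {ζ : ℂ | ζ.im < 0}) (nhdsWithin 0 {ζ : ℂ | 0 < ζ.im}) := by
    apply tendsto_nhdsWithin_of_tendsto_nhds_of_eventually_within
    · have h1 := (Complex.continuous_conj.tendsto (0:ℂ))
      rw [map_zero] at h1
      exact h1.mono_left nhdsWithin_le_nhds
    · filter_upwards [eventually_mem_nhdsWithin] with ζ' hζ'
      have h4 : ζ'.im < 0 := hζ'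
      show 0 < ((starRingEnd ℂ) ζ').im
      rw [Complex.conj_im]
      linarith
  have h2 := upper_half.comp hconj
  have h3 := (Complex.continuous_conj.tendsto _).comp h2
  have hval : (starRingEnd ℂ) (Complex.I * (Real.sqrt (Real.pi / 2) : ℂ))
      = -Complex.I * (Real.sqrt (Real.pi / 2) : ℂ) := by
    rw [map_mul, Complex.conj_I, Complex.conj_ofReal]
  rw [hval] at h3
  apply h3.congr
  intro ζ'
  simp only [Function.comp_apply]
  rw [← plasma_conj]
  simp


end Aux

/-- As `ζ → 0` with `Im ζ > 0`, `Z(ζ) → i√(π/2)`; as `ζ → 0` with `Im ζ < 0`,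
`Z(ζ) → -i√(π/2)`. -/
theorem plasmaZ_tendsto_zero :
    Tendsto plasmaZ (nhdsWithin 0 {ζ : ℂ | 0 < ζ.im})
      (nhds (Complex.I * (Real.sqrt (Real.pi / 2) : ℂ))) ∧
    Tendsto plasmaZ (nhdsWithin 0 {ζ : ℂ | ζ.im < 0})
      (nhds (-Complex.I * (Real.sqrt (Real.pi / 2) : ℂ))) :=
  ⟨upper_half, lower_half⟩
end

section
/- Let P(w) = Σ_{n=0}^N P_n H_n(w) be a polynomial expanded in probabilists' Hermite polynomials, and write Z^{(n)}(ζ) = p_n(ζ) + (-1)^n H_n(ζ) Z(ζ). Then for every ζ ∈ ℂ \ ℝ, ∫_ℝ P(w) e^{-w²/2}/(w-ζ) dw / √(2π) = P(ζ) Z(ζ) + Σ_{n=0}^N P_n (-1)^n p_n(ζ). -/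
open MeasureTheory Finset

/-- Evaluation of the `n`-th probabilists' Hermite polynomial at a complex number. -/
noncomputable def hermiteC (n : ℕ) (ζ : ℂ) : ℂ :=
  (Polynomial.hermite n).eval₂ (Int.castRingHom ℂ) ζ

namespace HermiteExpAux

open Polynomial Filter Topology Set Metric

/-- Real Hermite polynomial. -/
noncomputable def Hr (n : ℕ) : Polynomial ℝ := (Polynomial.hermite n).map (Int.castRingHom ℝ)

/-- Hermite function. -/
noncomputable def φ (n : ℕ) (w : ℝ) : ℝ := (Hr n).eval w * Real.exp (-w ^ 2 / 2)

lemma Hr_zero : Hr 0 = 1 := by simp [Hr, Polynomial.hermite_zero]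

lemma Hr_succ (n : ℕ) : Hr (n + 1) = X * Hr n - derivative (Hr n) := by
  simp [Hr, Polynomial.hermite_succ, Polynomial.derivative_map]

lemma continuous_φ (n : ℕ) : Continuous (φ n) :=
  ((Hr n).continuous).mul (Real.continuous_exp.comp (by continuity))

lemma hasDerivAt_φ (n : ℕ) (w : ℝ) : HasDerivAt (φ n) (-(φ (n + 1) w)) w := by
  have h1 : HasDerivAt (fun x : ℝ => (Hr n).eval x) ((derivative (Hr n)).eval w) w :=
    (Hr n).hasDerivAt w
  have h2 : HasDerivAt (fun x : ℝ => Real.exp (-x ^ 2 / 2)) (-w * Real.exp (-w ^ 2 / 2)) w := by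
    have hinner : HasDerivAt (fun x : ℝ => -x ^ 2 / 2) (-w) w := by
      have := ((hasDerivAt_pow 2 w).neg).div_const 2
      simpa using this.congr_deriv (by ring)
    simpa [mul_comm, Function.comp_def] using (Real.hasDerivAt_exp (-w ^ 2 / 2)).comp w hinner
  have := h1.mul h2
  refine this.congr_deriv ?_
  simp only [φ, Hr_succ, eval_sub, eval_mul, eval_X]
  ring

lemma hermiteC_ofReal (n : ℕ) (w : ℝ) : hermiteC n (w : ℂ) = (((Hr n).eval w : ℝ) : ℂ) := by
  have h := Polynomial.hom_eval₂ (Polynomial.hermite n) (Int.castRingHom ℝ) Complex.ofRealHom w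
  rw [Hr, eval_map, hermiteC,
    show (((Polynomial.hermite n).eval₂ (Int.castRingHom ℝ) w : ℝ) : ℂ) =
      Complex.ofRealHom ((Polynomial.hermite n).eval₂ (Int.castRingHom ℝ) w) from rfl, h,
    show Complex.ofRealHom.comp (Int.castRingHom ℝ) = Int.castRingHom ℂ from Subsingleton.elim _ _]
  rfl

lemma exp_ofReal (w : ℝ) :
    Complex.exp (-(w : ℂ) ^ 2 / 2) = ((Real.exp (-w ^ 2 / 2) : ℝ) : ℂ) := by
  rw [Complex.ofReal_exp]; norm_num

lemma hermiteC_mul_exp (n : ℕ) (w : ℝ) :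
    hermiteC n (w : ℂ) * Complex.exp (-(w : ℂ) ^ 2 / 2) = ((φ n w : ℝ) : ℂ) := by
  rw [hermiteC_ofReal, exp_ofReal, φ]; push_cast; ring


lemma pow_gauss_bound (j : ℕ) (w : ℝ) :
    |w| ^ j * Real.exp (-w ^ 2 / 2) ≤ (j.factorial * Real.exp 1) * Real.exp (-(1/4) * w ^ 2) := by
  have h1 : |w| ^ j ≤ j.factorial * Real.exp |w| := by
    have := Real.pow_div_factorial_le_exp |w| (abs_nonneg w) j
    have hf : (0:ℝ) < j.factorial := by positivity
    rw [div_le_iff₀ hf] at this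
    linarith [this]
  have h2 : |w| - w ^ 2 / 4 ≤ 1 := by nlinarith [sq_nonneg (|w| - 2), sq_abs w]
  calc |w| ^ j * Real.exp (-w ^ 2 / 2)
      ≤ (j.factorial * Real.exp |w|) * Real.exp (-w ^ 2 / 2) := by
        exact mul_le_mul_of_nonneg_right h1 (Real.exp_pos _).le
    _ = j.factorial * (Real.exp (|w| - w ^ 2 / 4) * Real.exp (-(1/4) * w ^ 2)) := by
        rw [mul_assoc, ← Real.exp_add, ← Real.exp_add]; congr 2; ring
    _ ≤ j.factorial * (Real.exp 1 * Real.exp (-(1/4) * w ^ 2)) := by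
        have := Real.exp_le_exp.mpr h2
        have h3 : (0:ℝ) ≤ j.factorial := by positivity
        exact mul_le_mul_of_nonneg_left
          (mul_le_mul_of_nonneg_right this (Real.exp_pos _).le) h3
    _ = (j.factorial * Real.exp 1) * Real.exp (-(1/4) * w ^ 2) := by ring

lemma integrable_monomial_gauss (j : ℕ) :
    Integrable fun w : ℝ => w ^ j * Real.exp (-w ^ 2 / 2) := by
  refine Integrable.mono'
    ((integrable_exp_neg_mul_sq (by norm_num : (0:ℝ) < 1/4)).const_mul
      (j.factorial * Real.exp 1)) ?_ ?_
  · exact ((continuous_pow j).mul (Real.continuous_exp.comp (by continuity))).aestronglyMeasurable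
  · refine Filter.Eventually.of_forall fun w => ?_
    rw [Real.norm_eq_abs, abs_mul, abs_of_nonneg (Real.exp_pos _).le, abs_pow]
    exact pow_gauss_bound j w

lemma integrable_poly_gauss (Q : Polynomial ℝ) :
    Integrable fun w : ℝ => Q.eval w * Real.exp (-w ^ 2 / 2) := by
  induction Q using Polynomial.induction_on' with
  | add p q hp hq => simpa [add_mul, Pi.add_def] using hp.add hq
  | monomial j a =>
      simpa [eval_monomial, mul_assoc] using (integrable_monomial_gauss j).const_mul a

lemma tendsto_monomial_gauss_atTop (j : ℕ) :
    Tendsto (fun w : ℝ => w ^ j * Real.exp (-w ^ 2 / 2)) atTop (𝓝 0) := by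
  refine squeeze_zero_norm' ?_ (Real.tendsto_pow_mul_exp_neg_atTop_nhds_zero j)
  filter_upwards [Filter.eventually_ge_atTop (2:ℝ)] with w hw
  rw [Real.norm_eq_abs, abs_mul, abs_of_nonneg (Real.exp_pos _).le, abs_pow,
    abs_of_nonneg (by linarith : (0:ℝ) ≤ w)]
  have : Real.exp (-w ^ 2 / 2) ≤ Real.exp (-w) := by
    apply Real.exp_le_exp.mpr; nlinarith
  exact mul_le_mul_of_nonneg_left this (by positivity)

lemma tendsto_poly_gauss_atTop (Q : Polynomial ℝ) :
    Tendsto (fun w : ℝ => Q.eval w * Real.exp (-w ^ 2 / 2)) atTop (𝓝 0) := by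
  induction Q using Polynomial.induction_on' with
  | add p q hp hq => simpa [add_mul] using hp.add hq
  | monomial j a =>
      have := (tendsto_monomial_gauss_atTop j).const_mul a
      simpa [eval_monomial, mul_assoc] using this

lemma tendsto_poly_gauss_atBot (Q : Polynomial ℝ) :
    Tendsto (fun w : ℝ => Q.eval w * Real.exp (-w ^ 2 / 2)) atBot (𝓝 0) := by
  have h := tendsto_poly_gauss_atTop (Q.comp (-X))
  have h2 := h.comp tendsto_neg_atBot_atTop
  refine h2.congr fun w => ?_
  simp [Function.comp, eval_comp]

lemma norm_sub_ge (w : ℝ) (ζ : ℂ) : |ζ.im| ≤ ‖(w : ℂ) - ζ‖ := by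
  have h : ((w : ℂ) - ζ).im = -ζ.im := by simp
  calc |ζ.im| = |((w : ℂ) - ζ).im| := by rw [h, abs_neg]
    _ ≤ ‖(w : ℂ) - ζ‖ := Complex.abs_im_le_norm _

lemma meas_kernel (n k : ℕ) (z : ℂ) :
    AEStronglyMeasurable (fun w : ℝ => ((φ n w : ℝ) : ℂ) / ((w : ℂ) - z) ^ k) volume := by
  apply Measurable.aestronglyMeasurable
  exact (Complex.measurable_ofReal.comp (continuous_φ n).measurable).div
    ((Complex.measurable_ofReal.sub measurable_const).pow_const k)

lemma abs_φ_integrable (n : ℕ) : Integrable (fun w : ℝ => |φ n w|) := by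
  simpa [φ] using (integrable_poly_gauss (Hr n)).abs

lemma kernel_bound {δ : ℝ} (hδ : 0 < δ) (n k : ℕ) {z : ℂ} (hlow : ∀ w : ℝ, δ ≤ ‖(w : ℂ) - z‖)
    (w : ℝ) : ‖((φ n w : ℝ) : ℂ) / ((w : ℂ) - z) ^ k‖ ≤ δ⁻¹ ^ k * |φ n w| := by
  rw [norm_div, norm_pow, Complex.norm_real, Real.norm_eq_abs]
  calc |φ n w| / ‖(w : ℂ) - z‖ ^ k ≤ |φ n w| / δ ^ k := by
        gcongr
        exact hlow w
    _ = δ⁻¹ ^ k * |φ n w| := by rw [inv_pow]; field_simp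
 
lemma integrable_kernel (n k : ℕ) {δ : ℝ} (hδ : 0 < δ) {z : ℂ}
    (hlow : ∀ w : ℝ, δ ≤ ‖(w : ℂ) - z‖) :
    Integrable fun w : ℝ => ((φ n w : ℝ) : ℂ) / ((w : ℂ) - z) ^ k := by
  refine Integrable.mono' ((abs_φ_integrable n).const_mul (δ⁻¹ ^ k)) (meas_kernel n k z) ?_
  exact Filter.Eventually.of_forall (kernel_bound hδ n k hlow)

lemma integral_hasDeriv_zero {f f' : ℝ → ℂ} (hd : ∀ x, HasDerivAt f (f' x) x)
    (hi : Integrable f') (ht : Tendsto f atTop (𝓝 0)) (hb : Tendsto f atBot (𝓝 0)) :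
    ∫ x : ℝ, f' x = 0 := by
  have h1 := integral_Ioi_of_hasDerivAt_of_tendsto' (a := 0) (fun x _ => hd x)
    hi.integrableOn ht
  have h2 := integral_Iic_of_hasDerivAt_of_tendsto' (a := 0) (fun x _ => hd x)
    hi.integrableOn hb
  rw [← intervalIntegral.integral_Iic_add_Ioi (b := 0) hi.integrableOn hi.integrableOn, h1, h2]
  ring

lemma sub_ne_zero_of_im {z : ℂ} (hz : z.im ≠ 0) (w : ℝ) : (w : ℂ) - z ≠ 0 := by
  intro h
  have := norm_sub_ge w z
  rw [h, norm_zero] at this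
  exact hz (abs_nonpos_iff.mp this)

lemma key_deriv (n : ℕ) {ζ : ℂ} (hζ : ζ.im ≠ 0) (w : ℝ) :
    HasDerivAt (fun x : ℝ => ((φ n x : ℝ) : ℂ) / ((x : ℂ) - ζ))
      (-(((φ (n + 1) w : ℝ) : ℂ) / ((w : ℂ) - ζ)) - ((φ n w : ℝ) : ℂ) / ((w : ℂ) - ζ) ^ 2) w := by
  have hne := sub_ne_zero_of_im hζ w
  have h1 : HasDerivAt (fun x : ℝ => ((φ n x : ℝ) : ℂ)) (((-(φ (n + 1) w) : ℝ) : ℂ)) w :=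
    (hasDerivAt_φ n w).ofReal_comp
  have h2 : HasDerivAt (fun x : ℝ => ((x : ℂ) - ζ)⁻¹) (-(((w : ℂ) - ζ) ^ 2)⁻¹) w := by
    have hz : HasDerivAt (fun z : ℂ => (z - ζ)⁻¹) (-1 / ((w : ℂ) - ζ) ^ 2) (w : ℂ) := by
      simpa [Pi.inv_def] using ((hasDerivAt_id ((w : ℂ))).sub_const ζ).inv hne
    have := hz.comp_ofReal
    simpa [neg_div] using this
  have h3 := h1.mul h2
  have : HasDerivAt (fun x : ℝ => ((φ n x : ℝ) : ℂ) * ((x : ℂ) - ζ)⁻¹)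
      (-(((φ (n + 1) w : ℝ) : ℂ) * ((w : ℂ) - ζ)⁻¹) -
        ((φ n w : ℝ) : ℂ) * (((w : ℂ) - ζ) ^ 2)⁻¹) w := by
    refine h3.congr_deriv ?_
    push_cast
    ring
  simpa [div_eq_mul_inv] using this

lemma tendsto_kernel_atTop (n : ℕ) {ζ : ℂ} (hζ : ζ.im ≠ 0) :
    Tendsto (fun x : ℝ => ((φ n x : ℝ) : ℂ) / ((x : ℂ) - ζ)) atTop (𝓝 0) := by
  have hpos : (0 : ℝ) < |ζ.im| := abs_pos.mpr hζ
  have hb : ∀ w : ℝ, ‖((φ n w : ℝ) : ℂ) / ((w : ℂ) - ζ)‖ ≤ |ζ.im|⁻¹ * |φ n w| := fun w => by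
    have := kernel_bound hpos n 1 (fun w => norm_sub_ge w ζ) w
    simpa using this
  refine squeeze_zero_norm hb ?_
  have h := (tendsto_poly_gauss_atTop (Hr n)).abs
  have h2 := h.const_mul (|ζ.im|⁻¹)
  simpa [φ, mul_comm] using h2

lemma tendsto_kernel_atBot (n : ℕ) {ζ : ℂ} (hζ : ζ.im ≠ 0) :
    Tendsto (fun x : ℝ => ((φ n x : ℝ) : ℂ) / ((x : ℂ) - ζ)) atBot (𝓝 0) := by
  have hpos : (0 : ℝ) < |ζ.im| := abs_pos.mpr hζ
  have hb : ∀ w : ℝ, ‖((φ n w : ℝ) : ℂ) / ((w : ℂ) - ζ)‖ ≤ |ζ.im|⁻¹ * |φ n w| := fun w => by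
    have := kernel_bound hpos n 1 (fun w => norm_sub_ge w ζ) w
    simpa using this
  refine squeeze_zero_norm hb ?_
  have h := (tendsto_poly_gauss_atBot (Hr n)).abs
  have h2 := h.const_mul (|ζ.im|⁻¹)
  simpa [φ, mul_comm] using h2

lemma step (n : ℕ) {ζ : ℂ} (hζ : ζ.im ≠ 0) :
    ∫ w : ℝ, ((φ n w : ℝ) : ℂ) / ((w : ℂ) - ζ) ^ 2 =
      -∫ w : ℝ, ((φ (n + 1) w : ℝ) : ℂ) / ((w : ℂ) - ζ) := by
  have hpos : (0 : ℝ) < |ζ.im| := abs_pos.mpr hζ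
  have hlow : ∀ w : ℝ, |ζ.im| ≤ ‖(w : ℂ) - ζ‖ := fun w => norm_sub_ge w ζ
  have hi1 : Integrable fun w : ℝ => ((φ (n + 1) w : ℝ) : ℂ) / ((w : ℂ) - ζ) := by
    simpa using integrable_kernel (n + 1) 1 hpos hlow
  have hi2 : Integrable fun w : ℝ => ((φ n w : ℝ) : ℂ) / ((w : ℂ) - ζ) ^ 2 :=
    integrable_kernel n 2 hpos hlow
  have h0 : ∫ w : ℝ, (-(((φ (n + 1) w : ℝ) : ℂ) / ((w : ℂ) - ζ)) -
      ((φ n w : ℝ) : ℂ) / ((w : ℂ) - ζ) ^ 2) = 0 :=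
    integral_hasDeriv_zero (key_deriv n hζ) (hi1.neg.sub hi2)
      (tendsto_kernel_atTop n hζ) (tendsto_kernel_atBot n hζ)
  have heq : (fun w : ℝ => -(((φ (n + 1) w : ℝ) : ℂ) / ((w : ℂ) - ζ)) -
      ((φ n w : ℝ) : ℂ) / ((w : ℂ) - ζ) ^ 2) = fun w : ℝ =>
      -((((φ (n + 1) w : ℝ) : ℂ) / ((w : ℂ) - ζ)) + ((φ n w : ℝ) : ℂ) / ((w : ℂ) - ζ) ^ 2) := by
    funext w; ring
  rw [heq, integral_neg, neg_eq_zero, integral_add hi1 hi2] at h0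
  linear_combination h0

lemma ball_lower {ζ : ℂ} (hζ : ζ.im ≠ 0) {z : ℂ} (hz : z ∈ ball ζ (|ζ.im| / 2)) (w : ℝ) :
    |ζ.im| / 2 ≤ ‖(w : ℂ) - z‖ := by
  have h1 : ‖ζ - z‖ < |ζ.im| / 2 := by
    rw [← dist_eq_norm]
    simpa [dist_comm] using hz
  have h2 : |ζ.im - z.im| ≤ ‖ζ - z‖ := by
    simpa using Complex.abs_im_le_norm (ζ - z)
  have h3 : |ζ.im| - |z.im| ≤ |ζ.im - z.im| := abs_sub_abs_le_abs_sub _ _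
  have h4 : |ζ.im| / 2 ≤ |z.im| := by linarith
  exact h4.trans (norm_sub_ge w z)

lemma hasDerivAt_int (n : ℕ) {ζ : ℂ} (hζ : ζ.im ≠ 0) :
    HasDerivAt (fun z : ℂ => ∫ w : ℝ, ((φ n w : ℝ) : ℂ) / ((w : ℂ) - z))
      (∫ w : ℝ, ((φ n w : ℝ) : ℂ) / ((w : ℂ) - ζ) ^ 2) ζ := by
  have hpos : (0 : ℝ) < |ζ.im| := abs_pos.mpr hζ
  have hε : (0 : ℝ) < |ζ.im| / 2 := by linarith
  have h := hasDerivAt_integral_of_dominated_loc_of_deriv_le (μ := volume)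
    (F := fun (z : ℂ) (w : ℝ) => ((φ n w : ℝ) : ℂ) / ((w : ℂ) - z))
    (F' := fun (z : ℂ) (w : ℝ) => ((φ n w : ℝ) : ℂ) / ((w : ℂ) - z) ^ 2)
    (x₀ := ζ) (bound := fun w => (|ζ.im| / 2)⁻¹ ^ 2 * |φ n w|) (ball_mem_nhds ζ hε)
    (Filter.Eventually.of_forall fun z => by simpa [pow_one] using meas_kernel n 1 z)
    (by simpa [pow_one] using integrable_kernel n 1 hpos (fun w => norm_sub_ge w ζ))
    (meas_kernel n 2 ζ)
    (Filter.Eventually.of_forall fun w => fun z hz =>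
      kernel_bound hε n 2 (ball_lower hζ hz) w)
    ((abs_φ_integrable n).const_mul _)
    (Filter.Eventually.of_forall fun w => fun z hz => ?_)
  · exact h.2
  · have hne : (w : ℂ) - z ≠ 0 := by
      intro h0
      have := ball_lower hζ hz w
      rw [h0, norm_zero] at this
      linarith
    have hd : HasDerivAt (fun z : ℂ => ((w : ℂ) - z)⁻¹) (((w : ℂ) - z) ^ 2)⁻¹ z := by
      have := ((hasDerivAt_id z).const_sub ((w : ℂ))).inv hne
      simpa [neg_div, Pi.inv_def] using this
    have := hd.const_mul ((φ n w : ℝ) : ℂ)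
    simpa [div_eq_mul_inv] using this

lemma isOpen_im_ne : IsOpen {z : ℂ | z.im ≠ 0} := by
  have : {z : ℂ | z.im ≠ 0} = Complex.im ⁻¹' ({0}ᶜ) := rfl
  rw [this]
  exact isOpen_compl_singleton.preimage Complex.continuous_im

lemma plasmaZ_eq {ζ : ℂ} :
    plasmaZ ζ = (Real.sqrt (2 * Real.pi) : ℂ)⁻¹ *
      ∫ w : ℝ, ((φ 0 w : ℝ) : ℂ) / ((w : ℂ) - ζ) := by
  rw [plasmaZ]
  congr 1
  refine integral_congr_ae (Filter.Eventually.of_forall fun w => ?_)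
  show Complex.exp (-(w : ℂ) ^ 2 / 2) / ((w : ℂ) - ζ) = ((φ 0 w : ℝ) : ℂ) / ((w : ℂ) - ζ)
  rw [show ((φ 0 w : ℝ) : ℂ) = Complex.exp (-(w : ℂ) ^ 2 / 2) by
    rw [φ, Hr_zero, eval_one, one_mul, exp_ofReal]]

lemma iteratedDeriv_plasmaZ (n : ℕ) : ∀ ζ : ℂ, ζ.im ≠ 0 →
    iteratedDeriv n plasmaZ ζ = (-1) ^ n *
      ((Real.sqrt (2 * Real.pi) : ℂ)⁻¹ * ∫ w : ℝ, ((φ n w : ℝ) : ℂ) / ((w : ℂ) - ζ)) := by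
  induction n with
  | zero =>
      intro ζ hζ
      simpa [iteratedDeriv_zero] using plasmaZ_eq (ζ := ζ)
  | succ n ih =>
      intro ζ hζ
      have hev : iteratedDeriv n plasmaZ =ᶠ[𝓝 ζ] fun z => (-1) ^ n *
          ((Real.sqrt (2 * Real.pi) : ℂ)⁻¹ * ∫ w : ℝ, ((φ n w : ℝ) : ℂ) / ((w : ℂ) - z)) :=
        Filter.eventually_of_mem (isOpen_im_ne.mem_nhds hζ) fun z hz => ih z hz
      rw [iteratedDeriv_succ, hev.deriv_eq]
      have hK := hasDerivAt_int n hζ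
      have hKd := (hK.const_mul ((Real.sqrt (2 * Real.pi) : ℂ)⁻¹)).const_mul ((-1 : ℂ) ^ n)
      rw [hKd.deriv, step n hζ]
      ring

end HermiteExpAux

open HermiteExpAux in
/-- If `P(w) = Σ_{n≤N} P_n H_n(w)` and `Z⁽ⁿ⁾ = p_n + (-1)ⁿ H_n Z`, then
`(1/√(2π)) ∫ P(w) e^{-w²/2}/(w-ζ) dw = P(ζ) Z(ζ) + Σ_{n≤N} P_n (-1)ⁿ p_n(ζ)`. -/
theorem hermite_expansion_integral (N : ℕ) (P : ℕ → ℂ) (p : ℕ → ℂ → ℂ)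
    (hp : ∀ n, n ≤ N → ∀ ζ : ℂ, ζ.im ≠ 0 →
      iteratedDeriv n plasmaZ ζ = p n ζ + (-1) ^ n * hermiteC n ζ * plasmaZ ζ) :
    ∀ ζ : ℂ, ζ.im ≠ 0 →
      (Real.sqrt (2 * Real.pi) : ℂ)⁻¹ *
        (∫ w : ℝ, (∑ n ∈ range (N + 1), P n * hermiteC n (w : ℂ)) *
          Complex.exp (-(w : ℂ) ^ 2 / 2) / ((w : ℂ) - ζ)) =
      (∑ n ∈ range (N + 1), P n * hermiteC n ζ) * plasmaZ ζ +
        ∑ n ∈ range (N + 1), P n * (-1) ^ n * p n ζ := by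
  intro ζ hζ
  have hpos : (0 : ℝ) < |ζ.im| := abs_pos.mpr hζ
  have hint : ∀ n : ℕ, Integrable fun w : ℝ => ((φ n w : ℝ) : ℂ) / ((w : ℂ) - ζ) := fun n => by
    simpa [pow_one] using integrable_kernel n 1 hpos (fun w => norm_sub_ge w ζ)
  have hfun : ∀ w : ℝ, (∑ n ∈ range (N + 1), P n * hermiteC n (w : ℂ)) *
      Complex.exp (-(w : ℂ) ^ 2 / 2) / ((w : ℂ) - ζ)
      = ∑ n ∈ range (N + 1), P n * (((φ n w : ℝ) : ℂ) / ((w : ℂ) - ζ)) := by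
    intro w
    rw [Finset.sum_mul, Finset.sum_div]
    refine Finset.sum_congr rfl fun n _ => ?_
    rw [mul_assoc, hermiteC_mul_exp, mul_div_assoc]
  rw [show (∫ w : ℝ, (∑ n ∈ range (N + 1), P n * hermiteC n (w : ℂ)) *
        Complex.exp (-(w : ℂ) ^ 2 / 2) / ((w : ℂ) - ζ)) =
      ∫ w : ℝ, ∑ n ∈ range (N + 1), P n * (((φ n w : ℝ) : ℂ) / ((w : ℂ) - ζ)) from
    integral_congr_ae (Filter.Eventually.of_forall hfun)]
  rw [integral_finset_sum _ (fun n _ => (hint n).const_mul (P n)), Finset.mul_sum]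
  have hterm : ∀ n ∈ range (N + 1),
      (Real.sqrt (2 * Real.pi) : ℂ)⁻¹ * ∫ w : ℝ, P n * (((φ n w : ℝ) : ℂ) / ((w : ℂ) - ζ))
      = P n * (-1) ^ n * p n ζ + P n * hermiteC n ζ * plasmaZ ζ := by
    intro n hn
    have h1 := iteratedDeriv_plasmaZ n ζ hζ
    have h2 := hp n (Nat.lt_succ_iff.mp (mem_range.mp hn)) ζ hζ
    have hsq : ((-1 : ℂ) ^ n) * ((-1 : ℂ) ^ n) = 1 := by
      rw [← mul_pow]; simp
    rw [MeasureTheory.integral_const_mul]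
    have h3 : (Real.sqrt (2 * Real.pi) : ℂ)⁻¹ * ∫ w : ℝ, ((φ n w : ℝ) : ℂ) / ((w : ℂ) - ζ)
        = (-1) ^ n * iteratedDeriv n plasmaZ ζ := by
      rw [h1, ← mul_assoc, hsq, one_mul]
    calc (Real.sqrt (2 * Real.pi) : ℂ)⁻¹ *
        (P n * ∫ w : ℝ, ((φ n w : ℝ) : ℂ) / ((w : ℂ) - ζ))
        = P n * ((Real.sqrt (2 * Real.pi) : ℂ)⁻¹ *
            ∫ w : ℝ, ((φ n w : ℝ) : ℂ) / ((w : ℂ) - ζ)) := by ring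
      _ = P n * ((-1) ^ n * (p n ζ + (-1) ^ n * hermiteC n ζ * plasmaZ ζ)) := by
          rw [h3, h2]
      _ = P n * (-1) ^ n * p n ζ + P n * (((-1 : ℂ) ^ n) * ((-1 : ℂ) ^ n)) *
            (hermiteC n ζ * plasmaZ ζ) := by ring
      _ = P n * (-1) ^ n * p n ζ + P n * hermiteC n ζ * plasmaZ ζ := by
          rw [hsq]; ring
  rw [Finset.sum_congr rfl hterm, Finset.sum_add_distrib, Finset.sum_mul]
  rw [add_comm]
end

section
/- Let S: H → H be a linear operator on a Hilbert space, B = Σ_{j=0}^{m-1} ⟨·, e_j⟩ d_j e_j a finite-rank operator with orthonormal (e_j) and scalars d_j, and z in the resolvent set of both S and S − B. Define the matrices G_S(z)_{n,m} = ⟨(S − z)^{-1} e_n, e_m⟩ and G_T(z)_{n,m} = ⟨(S − B − z)^{-1} e_n, e_m⟩, and D = diag(d_0,…,d_{m-1}). Then G_T (Id − D G_S) = G_S. Consequently, if z is an eigenvalue of S − B not in the spectrum of S, then det(Id − D G_S(z)) = 0. -/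
open scoped ComplexInnerProductSpace

/-- Finite-rank perturbation determinant condition. Let `S` be a linear operator on a
Hilbert space, `B f = Σ_j d_j ⟨f, e_j⟩ e_j` a finite-rank operator built from an
orthonormal family `(e_j)`, and `z` in the resolvent set of `S` (witnessed by a
two-sided inverse `RS` of `S - z`). With `G_S(n,m) = ⟨(S-z)⁻¹ e_n, e_m⟩`,
`G_T(n,m) = ⟨(S-B-z)⁻¹ e_n, e_m⟩` and `D = diag(d)`:
(1) if `z` is also in the resolvent set of `S - B`, then `G_T (Id - D G_S) = G_S`;
(2) if `z` is an eigenvalue of `S - B`, then `det(Id - D G_S) = 0`.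
(Here the inner product `⟨f, g⟩` of the paper, linear in `f`, is `⟪g, f⟫` in Mathlib's
convention.) -/
theorem finite_rank_perturbation_determinant (H : Type*) [NormedAddCommGroup H]
    [InnerProductSpace ℂ H] (m : ℕ) (e : Fin m → H) (he : Orthonormal ℂ e)
    (d : Fin m → ℂ) (S B : H →ₗ[ℂ] H)
    (hB : ∀ f : H, B f = ∑ j : Fin m, (d j * ⟪e j, f⟫) • e j)
    (z : ℂ) (RS : H →ₗ[ℂ] H)
    (hRS1 : ∀ x : H, S (RS x) - z • RS x = x) (hRS2 : ∀ x : H, RS (S x - z • x) = x)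
    (GS : Matrix (Fin m) (Fin m) ℂ) (hGS : ∀ n m' : Fin m, GS n m' = ⟪e m', RS (e n)⟫) :
    (∀ RT : H →ₗ[ℂ] H,
      (∀ x : H, S (RT x) - B (RT x) - z • RT x = x) →
      (∀ x : H, RT (S x - B x - z • x) = x) →
      ∀ GT : Matrix (Fin m) (Fin m) ℂ, (∀ n m' : Fin m, GT n m' = ⟪e m', RT (e n)⟫) →
        GT * (1 - Matrix.diagonal d * GS) = GS) ∧
    ((∃ f : H, f ≠ 0 ∧ S f - B f = z • f) →
      (1 - Matrix.diagonal d * GS).det = 0) := by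
  have key : ∀ g : H, ∀ k : Fin m, ⟪e k, RS (B g)⟫ =
      ∑ j : Fin m, (d j * ⟪e j, g⟫) * GS j k := by
    intro g k
    rw [hB g, map_sum, inner_sum]
    refine Finset.sum_congr rfl fun j _ => ?_
    rw [map_smul, inner_smul_right, hGS]
  constructor
  · intro RT hRT1 hRT2 GT hGT
    have h1 : ∀ x : H, RT x = RS x + RS (B (RT x)) := by
      intro x
      have h := hRT1 x
      rw [sub_right_comm, sub_eq_iff_eq_add] at h
      have h2 := hRS2 (RT x)
      rw [h, map_add] at h2
      exact h2.symm
    have hGTval : ∀ n k : Fin m, GT n k = GS n k + ∑ j : Fin m, (d j * GT n j) * GS j k := by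
      intro n k
      rw [hGT, h1 (e n), inner_add_right, key, ← hGS]
      congr 1
      refine Finset.sum_congr rfl fun j _ => ?_
      rw [hGT]
    ext n k
    rw [Matrix.mul_apply]
    simp only [Matrix.sub_apply, Matrix.one_apply, Matrix.mul_apply, Matrix.diagonal_apply,
      ite_mul, zero_mul, Finset.sum_ite_eq, Finset.mem_univ, if_true, mul_sub,
      Finset.sum_sub_distrib, mul_ite, mul_one, mul_zero, Finset.sum_ite_eq']
    have hsum : ∑ x : Fin m, GT n x * (d x * GS x k) = ∑ j : Fin m, (d j * GT n j) * GS j k :=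
      Finset.sum_congr rfl fun j _ => by ring
    rw [hsum, hGTval n k]
    ring
  · rintro ⟨f, hf0, hfe⟩
    have hBf : S f - z • f = B f := by
      rw [sub_eq_iff_eq_add] at hfe ⊢
      rw [hfe]; abel
    have hfRS : f = RS (B f) := by
      have := hRS2 f
      rw [hBf] at this
      exact this.symm
    set v : Fin m → ℂ := fun j => ⟪e j, f⟫ with hv
    have hvne : v ≠ 0 := by
      intro hcontra
      apply hf0
      have hB0 : B f = 0 := by
        rw [hB f]
        refine Finset.sum_eq_zero fun j _ => ?_
        have : v j = 0 := by rw [hcontra]; rfl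
        rw [show (⟪e j, f⟫ : ℂ) = v j from rfl, this, mul_zero, zero_smul]
      rw [hfRS, hB0, map_zero]
    have hvker : Matrix.vecMul v (1 - Matrix.diagonal d * GS) = 0 := by
      funext k
      simp only [Matrix.vecMul, dotProduct, Matrix.sub_apply, Matrix.one_apply,
        Matrix.diagonal_mul, Pi.zero_apply]
      have hvk : v k = ∑ j : Fin m, (d j * v j) * GS j k := by
        calc v k = ⟪(e k : H), RS (B f)⟫ := congrArg (inner ℂ (e k)) hfRS
        _ = _ := key f k
      simp only [mul_sub, Finset.sum_sub_distrib, mul_ite, mul_one, mul_zero,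
        Finset.sum_ite_eq', Finset.mem_univ, if_true]
      rw [hvk]
      refine sub_eq_zero.mpr (Finset.sum_congr rfl fun j _ => ?_)
      ring
    rw [← Matrix.exists_vecMul_eq_zero_iff]
    exact ⟨v, hvne, hvker⟩
end
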